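/- arXiv:2405.07247 — 3 statements merged into one kernel-verified Lean document; each statement's English description precedes it below -/
import Mathlib

section
/- Let Θ ⊆ Δ and let I be a Θ-ideal in Φ⁺. Then the W_Θ-action on R preserves the ideal a(I): for every w ∈ W_Θ and every f ∈ a(I), one has w(f) ∈ a(I). In particular, the W_Θ-action on R descends to an action on the quotient ring R/a(I). -/
open scoped Classical

noncomputable section

variable (V : Type) [AddCommGroup V] [Module ℚ V]

/-- A finite reduced crystallographic root system `Φ` spanning the `ℚ`-vector space `V`,
together with a fixed system of positive roots `Pos`, the corresponding set of simple
roots `Δ`, the coroots `coroot α` (so that the reflection associated to `α` is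
`x ↦ x - coroot α x • α`), and `coeff α δ`, the (unique, by linear independence of `Δ`)
nonnegative integral coefficient of the simple root `δ` in the expression of the
positive root `α` as a combination of simple roots. -/
structure RootSystemData where
  Φ : Finset V
  Pos : Finset V
  Δ : Finset V
  coeff : V → V → ℕ
  coroot : V → V →ₗ[ℚ] ℚ
  span_eq_top : Submodule.span ℚ (Φ : Set V) = ⊤
  root_ne_zero : ∀ α ∈ Φ, α ≠ (0 : V)
  reduced : ∀ α ∈ Φ, ∀ c : ℚ, c • α ∈ Φ → c = 1 ∨ c = -1
  coroot_self : ∀ α ∈ Φ, coroot α α = 2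
  reflect_mem : ∀ α ∈ Φ, ∀ β ∈ Φ, β - coroot α β • α ∈ Φ
  crystallographic : ∀ α ∈ Φ, ∀ β ∈ Φ, ∃ n : ℤ, coroot α β = (n : ℚ)
  pos_subset : Pos ⊆ Φ
  pos_or_neg : ∀ α ∈ Φ, α ∈ Pos ∨ -α ∈ Pos
  pos_not_neg : ∀ α ∈ Pos, -α ∉ Pos
  simple_subset : Δ ⊆ Pos
  simple_indep : LinearIndependent ℚ (fun δ : (Δ : Set V) => (δ : V))
  pos_combo : ∀ α ∈ Pos, α = ∑ δ ∈ Δ, (coeff α δ : ℚ) • δ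

variable {V}

/-- `I` is a lower ideal in the set `Pos` of positive roots. -/
def IsLowerIdealOf (Pos I : Finset V) : Prop :=
  I ⊆ Pos ∧ ∀ α ∈ I, ∀ β ∈ Pos, α - β ∈ Pos → α - β ∈ I

/-- `Φ⁺_Θ`: the positive roots that are `ℤ`-linear combinations of roots in `Θ`. -/
def posThetaOf (Pos Θ : Finset V) : Finset V :=
  Pos.filter fun α => ∃ c : V → ℤ, α = ∑ δ ∈ Θ, (c δ : ℚ) • δ

/-- `I` is an upper ideal with respect to `Θ`. -/
def IsUpperIdealWrt (Pos Θ I : Finset V) : Prop :=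
  ∀ α ∈ I, ∀ β ∈ posThetaOf Pos Θ, α + β ∈ Pos → α + β ∈ I

/-- `I` is a `Θ`-ideal. -/
def IsThetaIdealOf (Pos Θ I : Finset V) : Prop :=
  IsLowerIdealOf Pos I ∧ IsUpperIdealWrt Pos Θ I ∧ posThetaOf Pos Θ ⊆ I

/-- The partial order `α ≼_Θ β`: `β - α` is a (possibly empty) sum of
positive roots belonging to `Φ⁺_Θ`. -/
def leTheta (Pos Θ : Finset V) (α β : V) : Prop :=
  ∃ m : Multiset V, (∀ γ ∈ m, γ ∈ posThetaOf Pos Θ) ∧ β - α = m.sum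

/-- `Y` is a Weyl type subset of the lower ideal `I`. -/
def IsWeylType (I Y : Finset V) : Prop :=
  Y ⊆ I ∧ (∀ α ∈ Y, ∀ β ∈ Y, α + β ∈ I → α + β ∈ Y) ∧
    ∀ γ ∈ I, ∀ δ ∈ I, γ ∉ Y → δ ∉ Y → γ + δ ∈ I → γ + δ ∉ Y

/-- `g` is the reflection `s_α` associated to the root `α`. -/
def IsReflectionOf (D : RootSystemData V) (α : V) (g : V ≃ₗ[ℚ] V) : Prop :=
  ∀ x, g x = x - D.coroot α x • α

/-- The Weyl group `W`, generated by the reflections `s_α` for `α ∈ Φ`. -/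
def WeylGroup (D : RootSystemData V) : Subgroup (V ≃ₗ[ℚ] V) :=
  Subgroup.closure {g | ∃ α ∈ D.Φ, IsReflectionOf D α g}

/-- The parabolic subgroup `W_Θ` generated by the reflections `s_α` for `α ∈ Θ`. -/
def WThetaGroup (D : RootSystemData V) (Θ : Finset V) : Subgroup (V ≃ₗ[ℚ] V) :=
  Subgroup.closure {g | ∃ α ∈ Θ, IsReflectionOf D α g}

/-- The length `ℓ(w)`: the smallest number of simple reflections needed to write `w`. -/
noncomputable def len (D : RootSystemData V) (w : V ≃ₗ[ℚ] V) : ℕ :=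
  sInf {p : ℕ | ∃ l : List (V ≃ₗ[ℚ] V), l.length = p ∧
    (∀ g ∈ l, ∃ α ∈ D.Δ, IsReflectionOf D α g) ∧ l.prod = w}

/-- `N(w) = {α ∈ Φ⁺ : w(α) ∈ Φ⁻}` (where `Φ⁻ = -Φ⁺`). -/
def negSet (D : RootSystemData V) (w : V ≃ₗ[ℚ] V) : Finset V :=
  D.Pos.filter fun α => -(w α) ∈ D.Pos

/-- `W^Θ`, the set of minimal length left coset representatives:
`{w ∈ W : ℓ(w) < ℓ(w s_α) for all α ∈ Θ}`. -/
def minCosetReps (D : RootSystemData V) (Θ : Finset V) : Set (V ≃ₗ[ℚ] V) :=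
  {w | w ∈ WeylGroup D ∧ ∀ g : V ≃ₗ[ℚ] V,
    (∃ α ∈ Θ, IsReflectionOf D α g) → len D w < len D (w * g)}

/-- The height `ht(α)` of a positive root: the sum of its coefficients over the simple roots. -/
def rootHt (D : RootSystemData V) (α : V) : ℕ := ∑ δ ∈ D.Δ, D.coeff α δ


variable {V : Type} [AddCommGroup V] [Module ℚ V] {κ : Type}

/-- The embedding of `V` as the degree-one part of the symmetric algebra
`R = Sym(V)`, realized as the polynomial ring `ℚ[X_i : i ∈ κ]` on a basis of `V`. -/
noncomputable def embR (bV : Module.Basis κ ℚ V) : V →ₗ[ℚ] MvPolynomial κ ℚ :=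
  (Finsupp.linearCombination ℚ (MvPolynomial.X : κ → MvPolynomial κ ℚ)).comp
    bV.repr.toLinearMap

/-- The algebra endomorphism of `R = Sym(V)` extending a linear automorphism `w` of `V`. -/
noncomputable def liftW (bV : Module.Basis κ ℚ V) (w : V ≃ₗ[ℚ] V) :
    MvPolynomial κ ℚ →ₐ[ℚ] MvPolynomial κ ℚ :=
  MvPolynomial.aeval fun i => embR bV (w (bV i))

/-- `ψ : R → R` is a `ℚ`-linear derivation of `R`. -/
def IsDerivFn (ψ : MvPolynomial κ ℚ → MvPolynomial κ ℚ) : Prop :=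
  IsLinearMap ℚ ψ ∧ ∀ f g, ψ (f * g) = ψ f * g + f * ψ g

/-- `ψ` belongs to the logarithmic derivation module `D(A_I)` of the ideal
arrangement `A_I`: it is a derivation of `R` with `ψ(α) ∈ Rα` for all `α ∈ I`. -/
def InLogDer (bV : Module.Basis κ ℚ V) (I : Finset V)
    (ψ : MvPolynomial κ ℚ → MvPolynomial κ ℚ) : Prop :=
  IsDerivFn ψ ∧ ∀ α ∈ I, ∃ r : MvPolynomial κ ℚ, ψ (embR bV α) = r * embR bV α

/-- The action of `w` on derivations: `(w·ψ)(f) = w(ψ(w⁻¹ f))`. -/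
noncomputable def actDer (bV : Module.Basis κ ℚ V) (w : V ≃ₗ[ℚ] V)
    (ψ : MvPolynomial κ ℚ → MvPolynomial κ ℚ) :
    MvPolynomial κ ℚ → MvPolynomial κ ℚ :=
  fun f => liftW bV w (ψ (liftW bV w⁻¹ f))

/-- The quadratic form on `V` associated to a polynomial `Q ∈ R`, by evaluation in the
coordinates of the given basis. -/
noncomputable def polyQuadForm (bV : Module.Basis κ ℚ V) (Q : MvPolynomial κ ℚ) (v : V) : ℚ :=
  MvPolynomial.eval (fun i => bV.repr v i) Q

/-- The symmetric bilinear form associated to the quadratic form of `Q` is nondegenerate. -/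
def NondegQuad (bV : Module.Basis κ ℚ V) (Q : MvPolynomial κ ℚ) : Prop :=
  ∀ v : V, (∀ u : V,
    polyQuadForm bV Q (v + u) - polyQuadForm bV Q v - polyQuadForm bV Q u = 0) → v = 0

/-! ### Auxiliary lemmas -/

lemma embR_basis (bV : Module.Basis κ ℚ V) (i : κ) : embR bV (bV i) = MvPolynomial.X i := by
  simp [embR]

lemma liftW_embR (bV : Module.Basis κ ℚ V) (w : V ≃ₗ[ℚ] V) (v : V) :
    liftW bV w (embR bV v) = embR bV (w v) := by
  have h : ((liftW bV w).toLinearMap.comp (embR bV)) = (embR bV).comp (w : V →ₗ[ℚ] V) := by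
    apply Module.Basis.ext bV
    intro i
    simp [embR_basis, liftW]
  exact LinearMap.congr_fun h v

lemma liftW_liftW_inv (bV : Module.Basis κ ℚ V) (w : V ≃ₗ[ℚ] V) (f : MvPolynomial κ ℚ) :
    liftW bV w (liftW bV w⁻¹ f) = f := by
  have h : (liftW bV w).comp (liftW bV w⁻¹) = AlgHom.id ℚ _ := by
    apply MvPolynomial.algHom_ext
    intro i
    simp only [AlgHom.comp_apply, AlgHom.id_apply]
    have h1 : liftW bV w⁻¹ (MvPolynomial.X i) = embR bV (w⁻¹ (bV i)) := by
      simp [liftW]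
    have h2 : w (w⁻¹ (bV i)) = bV i := w.apply_symm_apply _
    rw [h1, liftW_embR, h2, embR_basis]
  exact AlgHom.congr_fun h f

lemma neg_mem_Phi (D : RootSystemData V) {α : V} (h : α ∈ D.Φ) : -α ∈ D.Φ := by
  have h2 := D.reflect_mem α h α h
  rwa [D.coroot_self α h, show α - (2:ℚ) • α = -α by module] at h2

/-- The reflection associated to `δ`, as a linear map. -/
noncomputable def reflMap (D : RootSystemData V) (δ : V) : V →ₗ[ℚ] V :=
  LinearMap.id - (D.coroot δ).smulRight δ

lemma reflMap_apply (D : RootSystemData V) (δ x : V) :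
    reflMap D δ x = x - D.coroot δ x • δ := rfl

lemma reflMap_involutive (D : RootSystemData V) {δ : V} (hδ : δ ∈ D.Φ) :
    Function.Involutive (reflMap D δ) := by
  intro x
  have h2 := D.coroot_self δ hδ
  simp only [reflMap_apply, map_sub, map_smul, smul_eq_mul, h2]
  module

/-- The reflection associated to `δ`, as a linear equivalence. -/
noncomputable def reflEquiv (D : RootSystemData V) (δ : V) (hδ : δ ∈ D.Φ) : V ≃ₗ[ℚ] V :=
  LinearEquiv.ofInvolutive (reflMap D δ) (reflMap_involutive D hδ)

lemma isReflectionOf_reflEquiv (D : RootSystemData V) (δ : V) (hδ : δ ∈ D.Φ) :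
    IsReflectionOf D δ (reflEquiv D δ hδ) := fun x => rfl

lemma refl_mul_self (D : RootSystemData V) {δ : V} (hδ : δ ∈ D.Φ) {g : V ≃ₗ[ℚ] V}
    (hg : IsReflectionOf D δ g) : g * g = 1 := by
  apply LinearEquiv.toLinearMap_injective
  apply LinearMap.ext
  intro x
  have : (g * g) x = g (g x) := rfl
  rw [LinearEquiv.coe_coe, this, hg x, hg _]
  have h2 := D.coroot_self δ hδ
  simp only [map_sub, map_smul, smul_eq_mul, h2]
  show x - D.coroot δ x • δ - (D.coroot δ x - D.coroot δ x * 2) • δ = x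
  module

lemma refl_inv_eq (D : RootSystemData V) {δ : V} (hδ : δ ∈ D.Φ) {g : V ≃ₗ[ℚ] V}
    (hg : IsReflectionOf D δ g) : g⁻¹ = g :=
  inv_eq_of_mul_eq_one_right (refl_mul_self D hδ hg)

lemma indep_coeffs (D : RootSystemData V) (f : V → ℚ)
    (h : ∑ γ ∈ D.Δ, f γ • γ = 0) : ∀ γ ∈ D.Δ, f γ = 0 := by
  have h2 := (Fintype.linearIndependent_iff.mp D.simple_indep) (fun γ => f γ)
  have h3 : ∑ i : (D.Δ : Set V), f i • (i : V) = 0 := by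
    rw [show ∑ i : (D.Δ : Set V), f (i:V) • (i : V) = ∑ γ ∈ D.Δ, f γ • γ from
      Finset.sum_coe_sort D.Δ (fun γ => f γ • γ)]
    exact h
  intro γ hγ
  exact h2 h3 ⟨γ, hγ⟩

lemma mem_posThetaOf {Pos Θ : Finset V} {α : V} (hα : α ∈ Pos) (c : V → ℤ)
    (h : α = ∑ γ ∈ Θ, (c γ : ℚ) • γ) : α ∈ posThetaOf Pos Θ :=
  Finset.mem_filter.mpr ⟨hα, c, h⟩

lemma single_combo (Θ : Finset V) {δ : V} (hδ : δ ∈ Θ) (m : ℤ) :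
    (m : ℚ) • δ = ∑ γ ∈ Θ, (((if γ = δ then m else 0 : ℤ) : ℚ)) • γ := by
  have h : ∀ γ ∈ Θ, (((if γ = δ then m else 0 : ℤ) : ℚ)) • γ
      = if γ = δ then (m : ℚ) • δ else 0 := by
    intro γ _
    by_cases hg : γ = δ <;> simp [hg]
  rw [Finset.sum_congr rfl h, Finset.sum_ite_eq' Θ δ (fun _ => (m : ℚ) • δ), if_pos hδ]

lemma delta_mem_posThetaOf (D : RootSystemData V) {Θ : Finset V} (hΘ : Θ ⊆ D.Δ)
    {δ : V} (hδ : δ ∈ Θ) : δ ∈ posThetaOf D.Pos Θ := by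
  refine mem_posThetaOf (D.simple_subset (hΘ hδ)) (fun x => if x = δ then 1 else 0) ?_
  have := single_combo Θ hδ 1
  simpa using this

lemma exists_coeff_notTheta (D : RootSystemData V) {Θ : Finset V} (hΘ : Θ ⊆ D.Δ)
    {α : V} (hα : α ∈ D.Pos) (hnot : α ∉ posThetaOf D.Pos Θ) :
    ∃ γ ∈ D.Δ, γ ∉ Θ ∧ 1 ≤ D.coeff α γ := by
  by_contra hcon
  push_neg at hcon
  apply hnot
  refine mem_posThetaOf hα (fun γ => (D.coeff α γ : ℤ)) ?_
  have hsum : ∑ γ ∈ D.Δ, (D.coeff α γ : ℚ) • γ = ∑ γ ∈ Θ, ((D.coeff α γ : ℤ) : ℚ) • γ := by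
    rw [← Finset.sum_subset hΘ]
    · exact Finset.sum_congr rfl fun γ _ => by push_cast; ring_nf
    · intro γ hγΔ hγΘ
      have h0 : D.coeff α γ = 0 := Nat.lt_one_iff.mp (hcon γ hγΔ hγΘ)
      simp [h0]
  exact (D.pos_combo α hα).trans hsum

lemma pos_of_add_smul (D : RootSystemData V) {Θ : Finset V} (hΘ : Θ ⊆ D.Δ)
    {α γ₀ δ : V} (hα : α ∈ D.Pos) (hγ₀ : γ₀ ∈ D.Δ) (hγ₀Θ : γ₀ ∉ Θ)
    (hc : 1 ≤ D.coeff α γ₀) (hδ : δ ∈ Θ) (q : ℚ)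
    (hmem : α + q • δ ∈ D.Φ) : α + q • δ ∈ D.Pos := by
  rcases D.pos_or_neg _ hmem with h | h
  · exact h
  exfalso
  have hδΔ : δ ∈ D.Δ := hΘ hδ
  have hzero : ∑ γ ∈ D.Δ, (((D.coeff α γ : ℚ) + (D.coeff (-(α + q • δ)) γ : ℚ)
      + (if γ = δ then q else 0)) • γ) = 0 := by
    simp only [add_smul, Finset.sum_add_distrib]
    have h1 : ∀ γ ∈ D.Δ, (if γ = δ then q else 0) • γ = if γ = δ then q • δ else 0 := by
      intro γ _
      by_cases hg : γ = δ <;> simp [hg]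
    rw [← D.pos_combo α hα, ← D.pos_combo _ h, Finset.sum_congr rfl h1,
      Finset.sum_ite_eq' D.Δ δ (fun _ => q • δ), if_pos hδΔ]
    abel
  have hz := indep_coeffs D _ hzero γ₀ hγ₀
  have hne : γ₀ ≠ δ := fun e => hγ₀Θ (e ▸ hδ)
  rw [if_neg hne] at hz
  have h1 : (0:ℚ) ≤ (D.coeff (-(α + q • δ)) γ₀ : ℚ) := Nat.cast_nonneg _
  have h2 : (1:ℚ) ≤ (D.coeff α γ₀ : ℚ) := by exact_mod_cast hc
  linarith

lemma key_sub_mem (D : RootSystemData V) {κ : Type} (bV : Module.Basis κ ℚ V)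
    {β δ : V} (hβ : β ∈ D.Φ) (hδ : δ ∈ D.Φ)
    (hprop : ∀ c : ℚ, β ≠ c • δ) (ha : 1 ≤ D.coroot δ β) :
    β - δ ∈ D.Φ := by
  haveI hfin : Module.Finite ℚ V := ⟨⟨D.Φ, D.span_eq_top⟩⟩
  haveI : Fintype κ := FiniteDimensional.fintypeBasisIndex bV
  -- the base positive definite form
  set B₀ : V → V → ℚ := fun x y => ∑ i, bV.repr x i * bV.repr y i with hB₀
  have B₀symm : ∀ x y, B₀ x y = B₀ y x := fun x y =>
    Finset.sum_congr rfl fun i _ => mul_comm _ _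
  have B₀add : ∀ x y z, B₀ (x + y) z = B₀ x z + B₀ y z := by
    intro x y z
    simp [hB₀, add_mul, Finset.sum_add_distrib]
  have B₀smul : ∀ (c : ℚ) (x y : V), B₀ (c • x) y = c * B₀ x y := by
    intro c x y
    simp [hB₀, Finset.mul_sum, mul_assoc]
  have B₀nonneg : ∀ x, 0 ≤ B₀ x x := fun x => Finset.sum_nonneg fun i _ => mul_self_nonneg _
  have B₀pos : ∀ x, x ≠ 0 → 0 < B₀ x x := by
    intro x hx
    rcases (B₀nonneg x).lt_or_eq with hlt | heq
    · exact hlt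
    exfalso
    apply hx
    have h0 : ∀ i ∈ Finset.univ, bV.repr x i * bV.repr x i = 0 :=
      (Finset.sum_eq_zero_iff_of_nonneg (fun i _ => mul_self_nonneg _)).mp heq.symm
    have hr : bV.repr x = 0 := by
      ext i
      exact mul_self_eq_zero.mp (h0 i (Finset.mem_univ i))
    have := congrArg bV.repr.symm hr
    simpa using this
  -- the finite group of symmetries of Φ
  let G : Subgroup (V ≃ₗ[ℚ] V) :=
    { carrier := {w | ∀ α ∈ D.Φ, w α ∈ D.Φ}
      one_mem' := fun α hα => hα
      mul_mem' := fun {a b} ha hb α hα => ha _ (hb α hα)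
      inv_mem' := by
        intro w hw α hα
        have himg : D.Φ.image (fun x => w x) = D.Φ := by
          apply Finset.eq_of_subset_of_card_le
          · intro y hy
            obtain ⟨x, hx, rfl⟩ := Finset.mem_image.mp hy
            exact hw x hx
          · rw [Finset.card_image_of_injective _ w.injective]
        rw [← himg] at hα
        obtain ⟨x, hx, hxe⟩ := Finset.mem_image.mp hα
        have : w⁻¹ α = x := by rw [← hxe]; exact w.symm_apply_apply x
        rw [this]
        exact hx }
  haveI : Finite G := by
    apply Finite.of_injective (fun (w : G) => (fun (α : D.Φ) =>
      (⟨(w : V ≃ₗ[ℚ] V) α, w.2 (α : V) α.2⟩ : D.Φ)))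
    intro w w' h
    apply Subtype.ext
    apply LinearEquiv.toLinearMap_injective
    apply LinearMap.ext_on D.span_eq_top
    intro x hx
    have := congrFun h ⟨x, hx⟩
    exact congrArg Subtype.val this
  haveI : Fintype G := Fintype.ofFinite G
  -- the averaged invariant form
  set B : V → V → ℚ := fun x y => ∑ g : G, B₀ ((g : V ≃ₗ[ℚ] V) x) ((g : V ≃ₗ[ℚ] V) y) with hB
  have Bsymm : ∀ x y, B x y = B y x := fun x y =>
    Finset.sum_congr rfl fun g _ => B₀symm _ _
  have Badd : ∀ x y z, B (x + y) z = B x z + B y z := by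
    intro x y z
    simp only [hB, map_add, B₀add, Finset.sum_add_distrib]
  have Bsmul : ∀ (c : ℚ) (x y : V), B (c • x) y = c * B x y := by
    intro c x y
    simp only [hB, map_smul, B₀smul, Finset.mul_sum]
  have Bsmul₂ : ∀ (c : ℚ) (x y : V), B x (c • y) = c * B x y := by
    intro c x y
    rw [Bsymm, Bsmul, Bsymm]
  have Badd₂ : ∀ x y z, B x (y + z) = B x y + B x z := by
    intro x y z
    rw [Bsymm, Badd, Bsymm x y, Bsymm x z]
  have Bpos : ∀ x, x ≠ 0 → 0 < B x x := by
    intro x hx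
    have h1 : B₀ (((1 : G) : V ≃ₗ[ℚ] V) x) (((1 : G) : V ≃ₗ[ℚ] V) x) = B₀ x x := rfl
    calc (0:ℚ) < B₀ x x := B₀pos x hx
    _ = B₀ (((1 : G) : V ≃ₗ[ℚ] V) x) (((1 : G) : V ≃ₗ[ℚ] V) x) := h1.symm
    _ ≤ B x x := Finset.single_le_sum (f := fun g : G => B₀ ((g : V ≃ₗ[ℚ] V) x) ((g : V ≃ₗ[ℚ] V) x))
        (fun g _ => B₀nonneg _) (Finset.mem_univ (1 : G))
  have Binv : ∀ g : G, ∀ x y, B ((g : V ≃ₗ[ℚ] V) x) ((g : V ≃ₗ[ℚ] V) y) = B x y := by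
    intro g x y
    exact Fintype.sum_equiv (Equiv.mulRight g)
      (fun h : G => B₀ ((h : V ≃ₗ[ℚ] V) ((g : V ≃ₗ[ℚ] V) x)) ((h : V ≃ₗ[ℚ] V) ((g : V ≃ₗ[ℚ] V) y)))
      (fun h : G => B₀ ((h : V ≃ₗ[ℚ] V) x) ((h : V ≃ₗ[ℚ] V) y)) (fun h => rfl)
  -- the reflection relation
  have Brefl : ∀ γ ∈ D.Φ, ∀ x, 2 * B x γ = D.coroot γ x * B γ γ := by
    intro γ hγ x
    have hsG : reflEquiv D γ hγ ∈ G := by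
      intro α hα
      show α - D.coroot γ α • γ ∈ D.Φ
      exact D.reflect_mem γ hγ α hα
    have h1 := Binv ⟨reflEquiv D γ hγ, hsG⟩ x γ
    have hsx : (reflEquiv D γ hγ) x = x - D.coroot γ x • γ := rfl
    have hsγ : (reflEquiv D γ hγ) γ = -γ := by
      show γ - D.coroot γ γ • γ = -γ
      rw [D.coroot_self γ hγ]
      module
    rw [show ((⟨reflEquiv D γ hγ, hsG⟩ : G) : V ≃ₗ[ℚ] V) = reflEquiv D γ hγ from rfl] at h1
    rw [hsx, hsγ] at h1
    have hexp : B (x - D.coroot γ x • γ) (-γ)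
        = -(B x γ) + D.coroot γ x * B γ γ := by
      rw [show x - D.coroot γ x • γ = x + (-(D.coroot γ x)) • γ by module,
        show (-γ : V) = (-1 : ℚ) • γ by module,
        Bsmul₂, Badd, Bsmul]
      ring
    rw [hexp] at h1
    linarith
  -- put everything together
  obtain ⟨ma, hma⟩ := D.crystallographic δ hδ β hβ
  obtain ⟨mb, hmb⟩ := D.crystallographic β hβ δ hδ
  have hδ0 : δ ≠ 0 := D.root_ne_zero δ hδ
  have hβ0 : β ≠ 0 := D.root_ne_zero β hβ
  have hdd : 0 < B δ δ := Bpos δ hδ0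
  have hbb : 0 < B β β := Bpos β hβ0
  have h2a : 2 * B β δ = D.coroot δ β * B δ δ := Brefl δ hδ β
  have h2b : 2 * B δ β = D.coroot β δ * B β β := Brefl β hβ δ
  have hBβδpos : 0 < B β δ := by nlinarith
  have hbpos : 0 < D.coroot β δ := by
    have hs : B δ β = B β δ := Bsymm δ β
    nlinarith
  have hx0 : (B δ δ) • β - (B β δ) • δ ≠ 0 := by
    intro hx
    apply hprop (B β δ / B δ δ)
    have : (B δ δ) • β = (B β δ) • δ := by
      have := sub_eq_zero.mp hx
      exact this
    calc β = (B δ δ)⁻¹ • ((B δ δ) • β) := by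
          rw [smul_smul, inv_mul_cancel₀ (ne_of_gt hdd), one_smul]
      _ = (B δ δ)⁻¹ • ((B β δ) • δ) := by rw [this]
      _ = (B β δ / B δ δ) • δ := by rw [smul_smul]; ring_nf
  have hCS : B β δ * B β δ < B δ δ * B β β := by
    have hxx := Bpos _ hx0
    have hexp : B ((B δ δ) • β - (B β δ) • δ) ((B δ δ) • β - (B β δ) • δ)
        = B δ δ * (B δ δ * B β β - B β δ * B β δ) := by
      rw [show (B δ δ) • β - (B β δ) • δ = (B δ δ) • β + (-(B β δ)) • δ by module]
      rw [Badd, Bsmul, Bsmul, Badd₂, Badd₂, Bsmul₂, Bsmul₂, Bsmul₂, Bsmul₂,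
        Bsymm δ β]
      ring
    nlinarith
  have hab : D.coroot δ β * D.coroot β δ < 4 := by
    have hs : B δ β = B β δ := Bsymm δ β
    rw [hs] at h2b
    have e1 : (2 * B β δ) * (2 * B β δ)
        = (D.coroot δ β * D.coroot β δ) * (B δ δ * B β β) := by
      nth_rewrite 1 [h2a]
      rw [h2b]; ring
    by_contra hge
    push_neg at hge
    have h5 : 4 * (B δ δ * B β β) ≤ (D.coroot δ β * D.coroot β δ) * (B δ δ * B β β) :=
      mul_le_mul_of_nonneg_right hge (le_of_lt (mul_pos hdd hbb))
    nlinarith [e1, h5, hCS]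
  have hma1 : 1 ≤ ma := by
    have : (1:ℚ) ≤ (ma : ℚ) := by rw [← hma]; exact ha
    exact_mod_cast this
  have hmb1 : 1 ≤ mb := by
    have : (0:ℚ) < (mb : ℚ) := by rw [← hmb]; exact hbpos
    have : 0 < mb := by exact_mod_cast this
    omega
  have hone : ma = 1 ∨ mb = 1 := by
    by_contra hcon
    push_neg at hcon
    have h1 : 2 ≤ ma := by omega
    have h2 : 2 ≤ mb := by omega
    have h3 : (4:ℚ) ≤ (ma : ℚ) * (mb : ℚ) := by
      have : (4:ℤ) ≤ ma * mb := by nlinarith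
      exact_mod_cast this
    rw [← hma, ← hmb] at h3
    linarith
  rcases hone with h | h
  · have hr := D.reflect_mem δ hδ β hβ
    rw [hma, h] at hr
    simpa using hr
  · have hr := D.reflect_mem β hβ δ hδ
    rw [hmb, h] at hr
    have hr2 : δ - β ∈ D.Φ := by simpa using hr
    have := neg_mem_Phi D hr2
    rwa [neg_sub] at this

lemma string_mem (D : RootSystemData V) {κ : Type} (bV : Module.Basis κ ℚ V)
    {β δ : V} (hβ : β ∈ D.Φ) (hδ : δ ∈ D.Φ)
    (hprop : ∀ c : ℚ, β ≠ c • δ) (n : ℕ) (hn : D.coroot δ β = (n : ℚ)) :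
    ∀ k : ℕ, k ≤ n → β - (k : ℚ) • δ ∈ D.Φ := by
  intro k
  induction k using Nat.strong_induction_on with
  | _ k ih =>
    intro hk
    match k, hk, ih with
    | 0, hk, ih => simpa using hβ
    | (k'+1), hk, ih =>
      have hβk : β - (k' : ℚ) • δ ∈ D.Φ := ih k' (Nat.lt_succ_self k') (le_of_lt hk)
      have hpair : D.coroot δ (β - (k' : ℚ) • δ) = (n : ℚ) - 2 * k' := by
        rw [map_sub, map_smul, hn, D.coroot_self δ hδ]
        push_cast [smul_eq_mul]
        ring
      by_cases hcase : (1:ℚ) ≤ (n : ℚ) - 2 * k'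
      · have hprop' : ∀ c : ℚ, β - (k' : ℚ) • δ ≠ c • δ := by
          intro c hc
          apply hprop (c + k')
          have : β = c • δ + (k' : ℚ) • δ := by
            rw [← hc]; abel
          rw [this, add_smul]
        have hkey := key_sub_mem D bV hβk hδ hprop' (by rw [hpair]; exact hcase)
        have : β - (k' : ℚ) • δ - δ = β - ((k' + 1 : ℕ) : ℚ) • δ := by
          push_cast
          module
        rwa [this] at hkey
      · push_neg at hcase
        have hn2k : n ≤ 2 * k' := by
          by_contra hcc
          push_neg at hcc
          have : (2 * k' + 1 : ℚ) ≤ (n : ℚ) := by exact_mod_cast hcc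
          linarith
        set j := n - (k' + 1) with hj
        have hjlt : j < k' + 1 := by omega
        have hjle : j ≤ n := by omega
        have hβj : β - (j : ℚ) • δ ∈ D.Φ := ih j hjlt hjle
        have hrefl := D.reflect_mem δ hδ _ hβj
        have hpj : D.coroot δ (β - (j : ℚ) • δ) = (n : ℚ) - 2 * j := by
          rw [map_sub, map_smul, hn, D.coroot_self δ hδ]
          push_cast [smul_eq_mul]
          ring
        rw [hpj] at hrefl
        have hjq : (j : ℚ) = (n : ℚ) - (k' + 1 : ℚ) := by
          rw [hj]
          push_cast [Nat.cast_sub hk]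
          ring
        have heq : β - (j : ℚ) • δ - ((n : ℚ) - 2 * j) • δ = β - ((k' + 1 : ℕ) : ℚ) • δ := by
          rw [hjq]
          push_cast
          module
        rwa [heq] at hrefl

lemma refl_maps_ideal (D : RootSystemData V) {κ : Type} (bV : Module.Basis κ ℚ V)
    {Θ : Finset V} (hΘ : Θ ⊆ D.Δ) {I : Finset V} (hI : IsThetaIdealOf D.Pos Θ I)
    {δ : V} (hδ : δ ∈ Θ) {g : V ≃ₗ[ℚ] V} (hg : IsReflectionOf D δ g)
    {α : V} (hα : α ∈ I) : g α ∈ I ∨ -(g α) ∈ I := by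
  obtain ⟨⟨hIP, hlow⟩, hup, hPT⟩ := hI
  have hδΔ : δ ∈ D.Δ := hΘ hδ
  have hδP : δ ∈ D.Pos := D.simple_subset hδΔ
  have hδΦ : δ ∈ D.Φ := D.pos_subset hδP
  have hαP : α ∈ D.Pos := hIP hα
  have hαΦ : α ∈ D.Φ := D.pos_subset hαP
  obtain ⟨m, hm⟩ := D.crystallographic δ hδΦ α hαΦ
  have hgα : g α = α - (m : ℚ) • δ := by rw [hg α, hm]
  have hgΦ : g α ∈ D.Φ := by
    rw [hg α]
    exact D.reflect_mem δ hδΦ α hαΦ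
  by_cases hαT : α ∈ posThetaOf D.Pos Θ
  · -- α is in Φ⁺_Θ
    obtain ⟨-, c, hc⟩ := Finset.mem_filter.mp hαT
    have hcombo : g α = ∑ γ ∈ Θ, ((c γ - if γ = δ then m else 0 : ℤ) : ℚ) • γ := by
      rw [hgα]
      have : ∀ γ ∈ Θ, ((c γ - if γ = δ then m else 0 : ℤ) : ℚ) • γ
          = (c γ : ℚ) • γ - ((if γ = δ then m else 0 : ℤ) : ℚ) • γ := by
        intro γ _
        push_cast
        rw [sub_smul]
      rw [Finset.sum_congr rfl this, Finset.sum_sub_distrib, ← hc, ← single_combo Θ hδ m]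
    rcases D.pos_or_neg _ hgΦ with h | h
    · exact Or.inl (hPT (mem_posThetaOf h _ hcombo))
    · refine Or.inr (hPT (mem_posThetaOf h (fun γ => -(c γ - if γ = δ then m else 0)) ?_))
      rw [show -(g α) = (-1 : ℚ) • (g α) by module, hcombo, Finset.smul_sum]
      refine Finset.sum_congr rfl fun γ _ => ?_
      push_cast
      rw [smul_smul]
      ring_nf
  · -- α is not in Φ⁺_Θ
    left
    obtain ⟨γ₀, hγ₀Δ, hγ₀Θ, hcoeff⟩ := exists_coeff_notTheta D hΘ hαP hαT
    have hPosOf : ∀ q : ℚ, α + q • δ ∈ D.Φ → α + q • δ ∈ D.Pos :=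
      fun q hq => pos_of_add_smul D hΘ hαP hγ₀Δ hγ₀Θ hcoeff hδ q hq
    have hprop : ∀ c : ℚ, α ≠ c • δ := by
      intro c hcc
      rcases D.reduced δ hδΦ c (by rw [← hcc]; exact hαΦ) with h1 | h1
      · apply hαT
        refine mem_posThetaOf hαP (fun x => if x = δ then 1 else 0) ?_
        rw [hcc, h1, one_smul]
        simpa using single_combo Θ hδ 1
      · apply hαT
        refine mem_posThetaOf hαP (fun x => if x = δ then -1 else 0) ?_
        rw [hcc, h1]
        have := single_combo Θ hδ (-1)
        push_cast at this ⊢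
        rw [← this]
    have hδT : δ ∈ posThetaOf D.Pos Θ := delta_mem_posThetaOf D hΘ hδ
    rcases lt_trichotomy m 0 with hm0 | hm0 | hm0
    · -- m < 0 : climb up using the upper ideal property
      set nn := (-m).toNat with hnn
      have hnnq : ((nn : ℕ) : ℚ) = -(m : ℚ) := by
        rw [hnn]
        have : ((-m).toNat : ℤ) = -m := Int.toNat_of_nonneg (by omega)
        exact_mod_cast congrArg (fun z : ℤ => (z : ℚ)) this
      have hnegcor : D.coroot δ (-α) = ((nn : ℕ) : ℚ) := by
        rw [map_neg, hm, hnnq]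
      have hpropneg : ∀ c : ℚ, -α ≠ c • δ := by
        intro c hcc
        apply hprop (-c)
        rw [neg_smul, ← hcc, neg_neg]
      have hstring : ∀ k : ℕ, k ≤ nn → α + (k : ℚ) • δ ∈ D.Φ := by
        intro k hk
        have := string_mem D bV (neg_mem_Phi D hαΦ) hδΦ hpropneg nn hnegcor k hk
        have h2 := neg_mem_Phi D this
        rwa [show -(-α - (k : ℚ) • δ) = α + (k : ℚ) • δ by module] at h2
      have hchain : ∀ k : ℕ, k ≤ nn → α + (k : ℚ) • δ ∈ I := by
        intro k
        induction k with
        | zero => intro _; simpa using hα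
        | succ k ihk =>
          intro hk
          have hIk : α + (k : ℚ) • δ ∈ I := ihk (by omega)
          have hP1 : α + ((k + 1 : ℕ) : ℚ) • δ ∈ D.Pos := hPosOf _ (hstring (k+1) hk)
          have := hup _ hIk δ hδT (by
            rw [show α + (k : ℚ) • δ + δ = α + ((k + 1 : ℕ) : ℚ) • δ by push_cast; module]
            exact hP1)
          rwa [show α + (k : ℚ) • δ + δ = α + ((k + 1 : ℕ) : ℚ) • δ by push_cast; module] at this
      have hfin : g α = α + ((nn : ℕ) : ℚ) • δ := by
        rw [hgα, hnnq]
        module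
      rw [hfin]
      exact hchain nn le_rfl
    · rw [hgα, hm0]
      simpa using hα
    · -- m > 0 : climb down using the lower ideal property
      set nn := m.toNat with hnn
      have hnnq : ((nn : ℕ) : ℚ) = (m : ℚ) := by
        rw [hnn]
        have : (m.toNat : ℤ) = m := Int.toNat_of_nonneg (by omega)
        exact_mod_cast congrArg (fun z : ℤ => (z : ℚ)) this
      have hcor : D.coroot δ α = ((nn : ℕ) : ℚ) := by rw [hm, hnnq]
      have hstring : ∀ k : ℕ, k ≤ nn → α - (k : ℚ) • δ ∈ D.Φ :=
        string_mem D bV hαΦ hδΦ hprop nn hcor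
      have hchain : ∀ k : ℕ, k ≤ nn → α - (k : ℚ) • δ ∈ I := by
        intro k
        induction k with
        | zero => intro _; simpa using hα
        | succ k ihk =>
          intro hk
          have hIk : α - (k : ℚ) • δ ∈ I := ihk (by omega)
          have hP1 : α - ((k + 1 : ℕ) : ℚ) • δ ∈ D.Pos := by
            have := hstring (k+1) hk
            rw [show α - ((k+1 : ℕ) : ℚ) • δ = α + (-(k+1 : ℕ) : ℚ) • δ by push_cast; module] at this ⊢
            exact hPosOf _ this
          have := hlow _ hIk δ hδP (by
            rw [show α - (k : ℚ) • δ - δ = α - ((k + 1 : ℕ) : ℚ) • δ by push_cast; module]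
            exact hP1)
          rwa [show α - (k : ℚ) • δ - δ = α - ((k + 1 : ℕ) : ℚ) • δ by push_cast; module] at this
      have hfin : g α = α - ((nn : ℕ) : ℚ) • δ := by rw [hgα, hnnq]
      rw [hfin]
      exact hchain nn le_rfl

lemma wtheta_maps_ideal (D : RootSystemData V) {κ : Type} (bV : Module.Basis κ ℚ V)
    {Θ : Finset V} (hΘ : Θ ⊆ D.Δ) {I : Finset V} (hI : IsThetaIdealOf D.Pos Θ I)
    {w : V ≃ₗ[ℚ] V} (hw : w ∈ WThetaGroup D Θ) :
    ∀ α ∈ I, w α ∈ I ∨ -(w α) ∈ I := by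
  have comp_step : ∀ f g : V ≃ₗ[ℚ] V, (∀ α ∈ I, f α ∈ I ∨ -(f α) ∈ I) →
      (∀ α ∈ I, g α ∈ I ∨ -(g α) ∈ I) → ∀ α ∈ I, f (g α) ∈ I ∨ -(f (g α)) ∈ I := by
    intro f g hf hg α hα
    rcases hg α hα with h | h
    · exact hf _ h
    · rcases hf _ h with h2 | h2
      · right
        rwa [map_neg] at h2
      · left
        rwa [map_neg, neg_neg] at h2
  have main : (∀ α ∈ I, w α ∈ I ∨ -(w α) ∈ I) ∧ (∀ α ∈ I, w⁻¹ α ∈ I ∨ -(w⁻¹ α) ∈ I) := by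
    induction hw using Subgroup.closure_induction with
    | mem x hx =>
      obtain ⟨δ, hδ, hrefl⟩ := hx
      have hδΦ : δ ∈ D.Φ := D.pos_subset (D.simple_subset (hΘ hδ))
      have hxinv : x⁻¹ = x := refl_inv_eq D hδΦ hrefl
      constructor
      · exact fun α hα => refl_maps_ideal D bV hΘ hI hδ hrefl hα
      · rw [hxinv]
        exact fun α hα => refl_maps_ideal D bV hΘ hI hδ hrefl hα
    | one =>
      constructor <;> exact fun α hα => Or.inl (by simpa using hα)
    | mul x y hx hy ihx ihy =>
      constructor
      · exact comp_step x y ihx.1 ihy.1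
      · rw [mul_inv_rev]
        exact comp_step y⁻¹ x⁻¹ ihy.2 ihx.2
    | inv x hx ihx =>
      refine ⟨ihx.2, ?_⟩
      rw [inv_inv]
      exact ihx.1
  exact main.1

/-- Let `Θ ⊆ Δ` and let `I` be a `Θ`-ideal in `Φ⁺`. Then the
`W_Θ`-action on `R` preserves the ideal `a(I) = {ψ(Q) : ψ ∈ D(A_I)}`: for every
`w ∈ W_Θ` and every `f ∈ a(I)`, one has `w(f) ∈ a(I)` (in particular, the
`W_Θ`-action descends to the quotient ring `R/a(I)`). -/
theorem aIdeal_stable_under_WTheta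
    (D : RootSystemData V) (bV : Module.Basis κ ℚ V)
    (Θ : Finset V) (hΘ : Θ ⊆ D.Δ)
    (I : Finset V) (hI : IsThetaIdealOf D.Pos Θ I)
    (Q : MvPolynomial κ ℚ) (hQ2 : Q.IsHomogeneous 2)
    (hQW : ∀ w ∈ WeylGroup D, liftW bV w Q = Q)
    (w : V ≃ₗ[ℚ] V) (hw : w ∈ WThetaGroup D Θ)
    (f : MvPolynomial κ ℚ)
    (hf : ∃ ψ, InLogDer bV I ψ ∧ ψ Q = f) :
    ∃ ψ, InLogDer bV I ψ ∧ ψ Q = liftW bV w f := by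
  obtain ⟨ψ, ⟨⟨hlin, hleib⟩, hlog⟩, hψQ⟩ := hf
  have hWsub : WThetaGroup D Θ ≤ WeylGroup D := by
    apply Subgroup.closure_mono
    rintro g ⟨δ, hδ, h⟩
    exact ⟨δ, D.pos_subset (D.simple_subset (hΘ hδ)), h⟩
  have hwW : w ∈ WeylGroup D := hWsub hw
  have hwinv : w⁻¹ ∈ WThetaGroup D Θ := inv_mem hw
  refine ⟨actDer bV w ψ, ⟨⟨?_, ?_⟩, ?_⟩, ?_⟩
  · constructor
    · intro x y
      simp only [actDer, map_add, hlin.map_add]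
    · intro c x
      simp only [actDer, map_smul, hlin.map_smul]
  · intro p q
    simp only [actDer, map_mul, hleib, map_add, map_mul, liftW_liftW_inv]
  · intro α hα
    rcases wtheta_maps_ideal D bV hΘ hI hwinv α hα with h | h
    · obtain ⟨r, hr⟩ := hlog _ h
      refine ⟨liftW bV w r, ?_⟩
      show liftW bV w (ψ (liftW bV w⁻¹ (embR bV α))) = _
      have hws : w (w⁻¹ α) = α := w.apply_symm_apply α
      rw [liftW_embR, hr, map_mul, liftW_embR, hws]
    · obtain ⟨r, hr⟩ := hlog _ h
      refine ⟨liftW bV w r, ?_⟩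
      show liftW bV w (ψ (liftW bV w⁻¹ (embR bV α))) = _
      have he : embR bV (w⁻¹ α) = -(embR bV (-(w⁻¹ α))) := by
        rw [map_neg, neg_neg]
      have h0 : w (w⁻¹ α) = α := w.apply_symm_apply α
      have hws : w (-(w⁻¹ α)) = -α := by rw [map_neg, h0]
      rw [liftW_embR, he, hlin.map_neg, hr, map_neg, map_mul, liftW_embR, hws,
        map_neg]
      ring
  · show liftW bV w (ψ (liftW bV w⁻¹ Q)) = liftW bV w f
    rw [hQW w⁻¹ (inv_mem hwW), hψQ]

end
end

section
/- Let Θ ⊆ Δ and let I be a Θ-ideal in Φ⁺. Then a(I)_Θ = a(I) ∩ R^{W_Θ}; that is, an element f of the invariant ring R^{W_Θ} can be written as f = ψ(Q) for some ψ ∈ D(A_I) if and only if it can be written as f = ψ'(Q) for some W_Θ-invariant derivation ψ' ∈ D(A_I)^{W_Θ}. -/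
open scoped Classical

noncomputable section

variable (V : Type) [AddCommGroup V] [Module ℚ V]

variable {V}

variable {V : Type} [AddCommGroup V] [Module ℚ V] {κ : Type}

namespace RootSystemData
variable (D : RootSystemData V)

lemma simple_mem_phi {δ : V} (h : δ ∈ D.Δ) : δ ∈ D.Φ := D.pos_subset (D.simple_subset h)

lemma neg_mem {α : V} (h : α ∈ D.Φ) : -α ∈ D.Φ := by
  have h2 := D.reflect_mem α h α h
  rw [D.coroot_self α h] at h2
  have : α - (2:ℚ) • α = -α := by module
  rwa [this] at h2

def reflMap (α : V) : V →ₗ[ℚ] V := LinearMap.id - (D.coroot α).smulRight α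

lemma reflMap_apply (α x : V) : D.reflMap α x = x - D.coroot α x • α := rfl

lemma reflMap_invol {α : V} (h2 : D.coroot α α = 2) (x : V) :
    D.reflMap α (D.reflMap α x) = x := by
  simp only [reflMap_apply, map_sub, map_smul, h2, smul_eq_mul]
  module

def reflEquiv (α : V) (h2 : D.coroot α α = 2) : V ≃ₗ[ℚ] V :=
  LinearEquiv.ofLinear (D.reflMap α) (D.reflMap α)
    (LinearMap.ext fun x => D.reflMap_invol h2 x)
    (LinearMap.ext fun x => D.reflMap_invol h2 x)

lemma reflEquiv_apply (α : V) (h2 : D.coroot α α = 2) (x : V) :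
    D.reflEquiv α h2 x = x - D.coroot α x • α := rfl



lemma reflection_inv_eq {g : V ≃ₗ[ℚ] V} {α : V} (hα : α ∈ D.Φ)
    (hg : ∀ x, g x = x - D.coroot α x • α) : g⁻¹ = g := by
  refine inv_eq_of_mul_eq_one_right (LinearEquiv.ext fun x => ?_)
  have : (g * g) x = g (g x) := rfl
  rw [this, hg, hg]
  have h2 := D.coroot_self α hα
  simp only [map_sub, map_smul, smul_eq_mul, h2]
  show _ = x
  module

lemma weyl_maps_phi {w : V ≃ₗ[ℚ] V} (hw : w ∈ WeylGroup D) :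
    ∀ α ∈ D.Φ, w α ∈ D.Φ ∧ w⁻¹ α ∈ D.Φ := by
  induction hw using Subgroup.closure_induction with
  | mem g hg =>
    obtain ⟨β, hβ, hgβ⟩ := hg
    intro α hα
    have h1 : g α ∈ D.Φ := by rw [hgβ]; exact D.reflect_mem β hβ α hα
    have h2 : g⁻¹ α ∈ D.Φ := by
      rw [D.reflection_inv_eq hβ hgβ, hgβ]; exact D.reflect_mem β hβ α hα
    exact ⟨h1, h2⟩
  | one => intro α hα; exact ⟨hα, hα⟩
  | mul x y hx hy ihx ihy =>
    intro α hα
    refine ⟨?_, ?_⟩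
    · have : (x * y) α = x (y α) := rfl
      rw [this]; exact (ihx _ ((ihy α hα).1)).1
    · have : (x * y)⁻¹ α = y⁻¹ (x⁻¹ α) := rfl
      rw [this]; exact (ihy _ ((ihx α hα).2)).2
  | inv x hx ihx =>
    intro α hα
    refine ⟨(ihx α hα).2, ?_⟩
    rw [inv_inv]; exact (ihx α hα).1

lemma weyl_finite : Finite (WeylGroup D) := by
  have key : ∀ w : WeylGroup D, ∀ α : D.Φ, (w : V ≃ₗ[ℚ] V) α ∈ D.Φ :=
    fun w α => ((D.weyl_maps_phi w.2) α α.2).1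
  let f : WeylGroup D → (D.Φ → D.Φ) := fun w α => ⟨(w : V ≃ₗ[ℚ] V) α, key w α⟩
  have hf : Function.Injective f := by
    intro w u h
    have : ∀ α ∈ (D.Φ : Set V), (w : V ≃ₗ[ℚ] V) α = (u : V ≃ₗ[ℚ] V) α := by
      intro α hα
      have := congrFun h ⟨α, hα⟩
      exact congrArg Subtype.val this
    have heq : ((w : V ≃ₗ[ℚ] V) : V →ₗ[ℚ] V) = ((u : V ≃ₗ[ℚ] V) : V →ₗ[ℚ] V) :=
      LinearMap.ext_on D.span_eq_top this
    ext x
    exact congrArg (fun (φ : V →ₗ[ℚ] V) => φ x) heq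
  exact Finite.of_injective f hf


lemma coeff_unique (f g : V → ℚ) (h : ∑ γ ∈ D.Δ, f γ • γ = ∑ γ ∈ D.Δ, g γ • γ) :
    ∀ γ ∈ D.Δ, f γ = g γ := by
  have h0 : ∑ γ ∈ D.Δ, (f γ - g γ) • (γ : V) = 0 := by
    have h2 : ∑ γ ∈ D.Δ, (f γ - g γ) • (γ : V)
        = ∑ γ ∈ D.Δ, f γ • γ - ∑ γ ∈ D.Δ, g γ • γ := by
      rw [← Finset.sum_sub_distrib]
      exact Finset.sum_congr rfl fun γ _ => sub_smul _ _ _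
    rw [h2, h, sub_self]
  have key := Fintype.linearIndependent_iff.mp D.simple_indep (fun γ => f γ.1 - g γ.1)
  have h1 : ∑ γ : (D.Δ : Set V), (f γ.1 - g γ.1) • (γ.1 : V) = 0 := by
    rw [← h0]
    rw [show (∑ γ : (D.Δ : Set V), (f γ.1 - g γ.1) • (γ.1 : V))
        = ∑ γ : ↥D.Δ, (f γ.1 - g γ.1) • (γ.1 : V) from
      Fintype.sum_equiv (Equiv.subtypeEquivRight (fun x => Finset.mem_coe)).symm _ _
        (fun γ => rfl)]
    exact Finset.sum_coe_sort D.Δ (fun γ => (f γ - g γ) • γ)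
  intro γ hγ
  have h3 := key h1 ⟨γ, hγ⟩
  dsimp at h3
  linarith

lemma nonprop {α δ : V} (hα : α ∈ D.Pos) (hδ : δ ∈ D.Δ) (hne : α ≠ δ) (t : ℚ) :
    α ≠ t • δ := by
  intro h
  have hδΦ : δ ∈ D.Φ := D.simple_mem_phi hδ
  have hαΦ : α ∈ D.Φ := D.pos_subset hα
  have ht : t • δ ∈ D.Φ := h ▸ hαΦ
  rcases D.reduced δ hδΦ t ht with h1 | h1
  · exact hne (by rw [h, h1, one_smul])
  · have : α = -δ := by rw [h, h1]; module
    exact D.pos_not_neg δ (D.simple_subset hδ) (this ▸ hα)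

lemma sub_smul_mem_pos {α δ : V} (hα : α ∈ D.Pos) (hδ : δ ∈ D.Δ)
    (hnp : ∀ t : ℚ, α ≠ t • δ) {t : ℚ} (hΦ : α - t • δ ∈ D.Φ) : α - t • δ ∈ D.Pos := by
  rcases D.pos_or_neg _ hΦ with h | h
  · exact h
  exfalso
  set β := -(α - t • δ) with hβ
  have hβpos : β ∈ D.Pos := h
  have hcombo := D.pos_combo β hβpos
  have hcomboα := D.pos_combo α hα
  have hsum : ∑ γ ∈ D.Δ, ((D.coeff β γ : ℚ) + (D.coeff α γ : ℚ)) • γ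
      = ∑ γ ∈ D.Δ, (if γ = δ then t else 0) • γ := by
    have hrhs : ∑ γ ∈ D.Δ, (if γ = δ then t else 0) • γ = t • δ := by
      have : ∀ γ ∈ D.Δ, (if γ = δ then t else 0) • γ
          = if γ = δ then t • γ else 0 := by
        intro γ _; split <;> simp
      rw [Finset.sum_congr rfl this]
      rw [Finset.sum_ite_eq' D.Δ δ (fun γ => t • γ), if_pos hδ]
    have hlhs : ∑ γ ∈ D.Δ, ((D.coeff β γ : ℚ) + (D.coeff α γ : ℚ)) • γ = β + α := by
      rw [show (∑ γ ∈ D.Δ, ((D.coeff β γ : ℚ) + (D.coeff α γ : ℚ)) • γ)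
          = ∑ γ ∈ D.Δ, ((D.coeff β γ : ℚ) • γ + (D.coeff α γ : ℚ) • γ) from
        Finset.sum_congr rfl fun γ _ => add_smul _ _ _]
      rw [Finset.sum_add_distrib, ← hcombo, ← hcomboα]
    rw [hlhs, hrhs, hβ]
    module
  have hco := D.coeff_unique _ _ hsum
  have hzero : ∀ γ ∈ D.Δ, γ ≠ δ → (D.coeff α γ : ℚ) = 0 := by
    intro γ hγ hne
    have h4 := hco γ hγ
    rw [if_neg hne] at h4
    have h5 : (0:ℚ) ≤ (D.coeff β γ : ℚ) := Nat.cast_nonneg _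
    have h6 : (0:ℚ) ≤ (D.coeff α γ : ℚ) := Nat.cast_nonneg _
    linarith
  have hfin : α = (D.coeff α δ : ℚ) • δ := by
    have h7 := Finset.sum_eq_single (s := D.Δ) (f := fun γ => (D.coeff α γ : ℚ) • γ) δ
      (fun γ hγ hne => by rw [hzero γ hγ hne, zero_smul])
      (fun hδ' => absurd hδ hδ')
    conv_lhs => rw [hcomboα]
    exact h7
  exact hnp _ hfin

lemma mem_posTheta {Θ : Finset V} {δ : V} (hδ : δ ∈ Θ) (hpos : δ ∈ D.Pos) :
    δ ∈ posThetaOf D.Pos Θ := by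
  refine Finset.mem_filter.mpr ⟨hpos, ⟨fun v => if v = δ then 1 else 0, ?_⟩⟩
  have : ∀ γ ∈ Θ, (((if γ = δ then (1:ℤ) else 0) : ℤ) : ℚ) • γ
      = if γ = δ then (1:ℚ) • γ else 0 := by
    intro γ _; split <;> simp
  rw [Finset.sum_congr rfl this, Finset.sum_ite_eq' Θ δ (fun γ => (1:ℚ) • γ),
    if_pos hδ, one_smul]


section Bform
variable (bV : Module.Basis κ ℚ V) [Fintype κ]

def B0 (x y : V) : ℚ := ∑ i : κ, bV.repr x i * bV.repr y i

lemma B0_symm (x y : V) : B0 bV x y = B0 bV y x := by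
  unfold B0; exact Finset.sum_congr rfl fun i _ => mul_comm _ _

lemma B0_add_left (x y z : V) : B0 bV (x + y) z = B0 bV x z + B0 bV y z := by
  unfold B0; rw [← Finset.sum_add_distrib]
  exact Finset.sum_congr rfl fun i _ => by rw [map_add]; push_cast [Finsupp.add_apply]; ring

lemma B0_smul_left (c : ℚ) (x y : V) : B0 bV (c • x) y = c * B0 bV x y := by
  unfold B0; rw [Finset.mul_sum]
  exact Finset.sum_congr rfl fun i _ => by rw [map_smul]; simp [Finsupp.smul_apply]; ring

lemma B0_self_nonneg (x : V) : 0 ≤ B0 bV x x :=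
  Finset.sum_nonneg fun i _ => mul_self_nonneg _

lemma B0_self_pos {x : V} (hx : x ≠ 0) : 0 < B0 bV x x := by
  have h : bV.repr x ≠ 0 := fun h => hx (by simpa using congrArg bV.repr.symm h)
  obtain ⟨i, hi⟩ := Finsupp.ne_iff.mp h
  simp only [Finsupp.coe_zero, Pi.zero_apply] at hi
  exact Finset.sum_pos' (fun j _ => mul_self_nonneg _)
    ⟨i, Finset.mem_univ i, mul_self_pos.mpr hi⟩

variable (D : RootSystemData V) [Fintype (WeylGroup D)]

def wB (x y : V) : ℚ := ∑ w : WeylGroup D, B0 bV ((w : V ≃ₗ[ℚ] V) x) ((w : V ≃ₗ[ℚ] V) y)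

lemma wB_symm (x y : V) : wB bV D x y = wB bV D y x :=
  Finset.sum_congr rfl fun w _ => B0_symm bV _ _

lemma wB_add_left (x y z : V) : wB bV D (x + y) z = wB bV D x z + wB bV D y z := by
  unfold wB; rw [← Finset.sum_add_distrib]
  exact Finset.sum_congr rfl fun w _ => by rw [map_add, B0_add_left]

lemma wB_smul_left (c : ℚ) (x y : V) : wB bV D (c • x) y = c * wB bV D x y := by
  unfold wB; rw [Finset.mul_sum]
  exact Finset.sum_congr rfl fun w _ => by rw [map_smul, B0_smul_left]

lemma wB_add_right (x y z : V) : wB bV D x (y + z) = wB bV D x y + wB bV D x z := by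
  rw [wB_symm, wB_add_left, wB_symm bV D y, wB_symm bV D z]

lemma wB_smul_right (c : ℚ) (x y : V) : wB bV D x (c • y) = c * wB bV D x y := by
  rw [wB_symm, wB_smul_left, wB_symm]

lemma wB_sub_left (x y z : V) : wB bV D (x - y) z = wB bV D x z - wB bV D y z := by
  have : x - y = x + (-1 : ℚ) • y := by module
  rw [this, wB_add_left, wB_smul_left]; ring

lemma wB_neg_right (x y : V) : wB bV D x (-y) = -wB bV D x y := by
  have : -y = (-1 : ℚ) • y := by module
  rw [this, wB_smul_right]; ring

lemma wB_self_nonneg (x : V) : 0 ≤ wB bV D x x :=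
  Finset.sum_nonneg fun w _ => B0_self_nonneg bV _

lemma wB_self_pos {x : V} (hx : x ≠ 0) : 0 < wB bV D x x := by
  refine Finset.sum_pos' (fun w _ => B0_self_nonneg bV _) ⟨1, Finset.mem_univ _, ?_⟩
  exact B0_self_pos bV (by simpa using hx)

lemma wB_self_eq_zero {x : V} (hx : wB bV D x x = 0) : x = 0 := by
  by_contra h
  exact absurd hx (ne_of_gt (wB_self_pos bV D h))

lemma wB_invariant (u : WeylGroup D) (x y : V) :
    wB bV D ((u : V ≃ₗ[ℚ] V) x) ((u : V ≃ₗ[ℚ] V) y) = wB bV D x y := by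
  unfold wB
  refine Fintype.sum_equiv (Equiv.mulRight u) _ _ fun w => ?_
  simp only [Equiv.coe_mulRight]
  congr 1 <;>
  · show ((w * u : WeylGroup D) : V ≃ₗ[ℚ] V) _ = _
    rfl

lemma coroot_eq_wB {α : V} (hα : α ∈ D.Φ) (x : V) :
    D.coroot α x * wB bV D α α = 2 * wB bV D x α := by
  have h2 := D.coroot_self α hα
  set s : V ≃ₗ[ℚ] V := D.reflEquiv α h2 with hs
  have hsW : s ∈ WeylGroup D := Subgroup.subset_closure ⟨α, hα, fun z => rfl⟩
  have hinv := wB_invariant bV D ⟨s, hsW⟩ x α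
  have hsx : s x = x - D.coroot α x • α := rfl
  have hsα : s α = -α := by
    show α - D.coroot α α • α = -α
    rw [h2]; module
  rw [show ((⟨s, hsW⟩ : WeylGroup D) : V ≃ₗ[ℚ] V) = s from rfl] at hinv
  rw [hsx, hsα, wB_neg_right, wB_sub_left, wB_smul_left] at hinv
  linarith

lemma wB_cauchy_strict {x y : V} (hy : y ≠ 0) (hnp : ∀ t : ℚ, x ≠ t • y) :
    (wB bV D x y) ^ 2 < wB bV D x x * wB bV D y y := by
  have hyy : 0 < wB bV D y y := wB_self_pos bV D hy
  set t : ℚ := wB bV D x y / wB bV D y y with ht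
  have hz : x - t • y ≠ 0 := by
    intro h
    exact hnp t (by rw [← sub_eq_zero]; exact h)
  have hpos : 0 < wB bV D (x - t • y) (x - t • y) := wB_self_pos bV D hz
  have hexp : wB bV D (x - t • y) (x - t • y)
      = wB bV D x x - 2 * t * wB bV D x y + t ^ 2 * wB bV D y y := by
    rw [show x - t • y = x + (-t) • y by module]
    rw [wB_add_left, wB_add_right, wB_add_right, wB_smul_left, wB_smul_right,
      wB_smul_left, wB_smul_right, wB_symm bV D y x]
    ring
  rw [hexp, ht] at hpos
  have h1 : wB bV D x x - 2 * (wB bV D x y / wB bV D y y) * wB bV D x y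
      + (wB bV D x y / wB bV D y y) ^ 2 * wB bV D y y
      = wB bV D x x - (wB bV D x y) ^ 2 / wB bV D y y := by
    field_simp; ring
  rw [h1] at hpos
  have := (div_lt_iff₀ hyy).mp (by linarith : (wB bV D x y) ^ 2 / wB bV D y y < wB bV D x x)
  linarith [this]

include bV in
/-- Key pairing lemma: if `⟨α, δ∨⟩ ≥ 1` for nonproportional roots, then `⟨δ, α∨⟩ ≥ 1`
and the product is at most 3. -/
lemma pairing_facts {α δ : V} (hα : α ∈ D.Φ) (hδ : δ ∈ D.Φ)
    (hnp : ∀ t : ℚ, α ≠ t • δ) (hc : 1 ≤ D.coroot δ α) :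
    1 ≤ D.coroot α δ ∧ D.coroot δ α * D.coroot α δ ≤ 3 := by
  have hδ0 : δ ≠ 0 := D.root_ne_zero δ hδ
  have hα0 : α ≠ 0 := D.root_ne_zero α hα
  have hαα : 0 < wB bV D α α := wB_self_pos bV D hα0
  have hδδ : 0 < wB bV D δ δ := wB_self_pos bV D hδ0
  have e1 : D.coroot δ α * wB bV D δ δ = 2 * wB bV D α δ := coroot_eq_wB bV D hδ α
  have e2 : D.coroot α δ * wB bV D α α = 2 * wB bV D δ α := coroot_eq_wB bV D hα δ
  have hsymm : wB bV D δ α = wB bV D α δ := wB_symm bV D δ α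
  have hBpos : 0 < wB bV D α δ := by nlinarith
  have hd : 0 < D.coroot α δ := by nlinarith
  have hCS : (wB bV D α δ) ^ 2 < wB bV D α α * wB bV D δ δ := wB_cauchy_strict bV D hδ0 hnp
  have hprod : D.coroot δ α * D.coroot α δ < 4 := by nlinarith
  obtain ⟨m, hm⟩ := D.crystallographic δ hδ α hα
  obtain ⟨n, hn⟩ := D.crystallographic α hα δ hδ
  rw [hn] at hd
  rw [hm, hn] at hprod ⊢
  have hn1 : 1 ≤ n := by exact_mod_cast hd
  have : m * n < 4 := by exact_mod_cast hprod
  constructor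
  · exact_mod_cast hn1
  · exact_mod_cast (by omega : m * n ≤ 3)

include bV in
lemma sub_root_of_two_le {α δ : V} (hαΦ : α ∈ D.Φ) (hδΦ : δ ∈ D.Φ)
    (hnp : ∀ t : ℚ, α ≠ t • δ) (h2 : 2 ≤ D.coroot δ α) : α - δ ∈ D.Φ := by
  obtain ⟨hd1, hprod⟩ := pairing_facts bV D hαΦ hδΦ hnp (le_trans one_le_two h2)
  obtain ⟨n, hn⟩ := D.crystallographic α hαΦ δ hδΦ
  have hd : D.coroot α δ = 1 := by
    rw [hn] at hd1 hprod ⊢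
    have hn2 : (n : ℚ) ≤ 3 / 2 := by nlinarith
    have : n ≤ 1 := by
      by_contra hcon
      push_neg at hcon
      have : (2 : ℚ) ≤ (n : ℚ) := by exact_mod_cast hcon
      linarith
    have hn1 : 1 ≤ n := by exact_mod_cast hd1
    have : n = 1 := le_antisymm this hn1
    rw [this]; norm_num
  have h3 := D.reflect_mem α hαΦ δ hδΦ
  rw [hd, one_smul] at h3
  have h4 := D.neg_mem h3
  rwa [neg_sub] at h4

include bV in
lemma reflect_stab {Θ I : Finset V} (hΘ : Θ ⊆ D.Δ) (hI : IsThetaIdealOf D.Pos Θ I)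
    {δ : V} (hδ : δ ∈ Θ) {α : V} (hα : α ∈ I) :
    α - D.coroot δ α • δ ∈ I ∨ -(α - D.coroot δ α • δ) ∈ I := by
  obtain ⟨⟨hIP, hlow⟩, hup, hsubθ⟩ := hI
  have hδΔ := hΘ hδ
  have hδPos := D.simple_subset hδΔ
  have hδΦ := D.pos_subset hδPos
  have hαPos := hIP hα
  have hαΦ := D.pos_subset hαPos
  have hδposθ : δ ∈ posThetaOf D.Pos Θ := D.mem_posTheta hδ hδPos
  have hδI : δ ∈ I := hsubθ hδposθ
  by_cases heq : α = δ
  · right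
    subst heq
    rw [D.coroot_self α hαΦ]
    rw [show -(α - (2:ℚ) • α) = α by module]
    exact hα
  have hnp : ∀ t : ℚ, α ≠ t • δ := D.nonprop hαPos hδΔ heq
  obtain ⟨m, hm⟩ := D.crystallographic δ hδΦ α hαΦ
  have hsΦ : α - D.coroot δ α • δ ∈ D.Φ := D.reflect_mem δ hδΦ α hαΦ
  have hsPos : α - D.coroot δ α • δ ∈ D.Pos := D.sub_smul_mem_pos hαPos hδΔ hnp hsΦ
  left
  rcases lt_trichotomy m 0 with hm0 | hm0 | hm0
  · -- m ≤ -1 : upward chain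
    have hnαΦ := D.neg_mem hαΦ
    have hnp' : ∀ t : ℚ, -α ≠ t • δ := by
      intro t h
      exact hnp (-t) (by rw [show α = -(-α) by module, h]; module)
    have hc1 : 1 ≤ D.coroot δ (-α) := by
      rw [map_neg, hm]
      have : 1 ≤ -m := by omega
      have : (1:ℚ) ≤ ((-m : ℤ) : ℚ) := by exact_mod_cast this
      push_cast at this ⊢
      linarith
    obtain ⟨hd1, hprod⟩ := pairing_facts bV D hnαΦ hδΦ hnp' hc1
    have hm3 : -3 ≤ m := by
      have h5 : D.coroot δ (-α) ≤ 3 := by nlinarith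
      rw [map_neg, hm] at h5
      have h7 : ((-m : ℤ) : ℚ) ≤ 3 := by push_cast; push_cast at h5; linarith
      have h8 : -m ≤ 3 := by exact_mod_cast h7
      omega
    interval_cases m
    · -- m = -3
      have hc2 : (2:ℚ) ≤ D.coroot δ (-α) := by rw [map_neg, hm]; push_cast; norm_num
      have hΦ1' : -α - δ ∈ D.Φ := sub_root_of_two_le bV D hnαΦ hδΦ hnp' hc2
      have hΦ1 : α + δ ∈ D.Φ := by
        have h6 := D.neg_mem hΦ1'
        rwa [show -(-α - δ) = α + δ by module] at h6
      have hP1 : α + δ ∈ D.Pos := by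
        have h6 := D.sub_smul_mem_pos (t := -1) hαPos hδΔ hnp
          (by rwa [show α - (-1:ℚ)•δ = α + δ by module])
        rwa [show α - (-1:ℚ)•δ = α + δ by module] at h6
      have hI1 : α + δ ∈ I := hup α hα δ hδposθ hP1
      have e1 : D.coroot δ (α + δ) = -1 := by
        rw [map_add, D.coroot_self δ hδΦ, hm]; push_cast; ring
      have hΦ2' := D.reflect_mem δ hδΦ (α + δ) hΦ1
      rw [e1] at hΦ2'
      rw [show (α + δ) - (-1:ℚ)•δ = α - (-2:ℚ)•δ by module] at hΦ2'
      have hP2 : α - (-2:ℚ)•δ ∈ D.Pos := D.sub_smul_mem_pos hαPos hδΔ hnp hΦ2'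
      have hI2 : (α + δ) + δ ∈ I := by
        rw [show α - (-2:ℚ)•δ = (α + δ) + δ by module] at hP2
        exact hup _ hI1 δ hδposθ hP2
      have h3 : α - D.coroot δ α • δ = ((α + δ) + δ) + δ := by rw [hm]; push_cast; module
      rw [h3] at hsPos ⊢
      exact hup _ hI2 δ hδposθ hsPos
    · -- m = -2
      have hc2 : (2:ℚ) ≤ D.coroot δ (-α) := by rw [map_neg, hm]; push_cast; norm_num
      have hΦ1' : -α - δ ∈ D.Φ := sub_root_of_two_le bV D hnαΦ hδΦ hnp' hc2
      have hΦ1 : α + δ ∈ D.Φ := by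
        have h6 := D.neg_mem hΦ1'
        rwa [show -(-α - δ) = α + δ by module] at h6
      have hP1 : α + δ ∈ D.Pos := by
        have h6 := D.sub_smul_mem_pos (t := -1) hαPos hδΔ hnp
          (by rwa [show α - (-1:ℚ)•δ = α + δ by module])
        rwa [show α - (-1:ℚ)•δ = α + δ by module] at h6
      have hI1 : α + δ ∈ I := hup α hα δ hδposθ hP1
      have h2 : α - D.coroot δ α • δ = (α + δ) + δ := by rw [hm]; push_cast; module
      rw [h2] at hsPos ⊢
      exact hup _ hI1 δ hδposθ hsPos
    · -- m = -1
      have h1 : α - D.coroot δ α • δ = α + δ := by rw [hm]; push_cast; module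
      rw [h1] at hsPos ⊢
      exact hup α hα δ hδposθ hsPos
  · -- m = 0
    rw [hm, hm0]
    push_cast
    rw [zero_smul, sub_zero]
    exact hα
  · -- m ≥ 1 : downward chain
    have hc1 : 1 ≤ D.coroot δ α := by
      rw [hm]; exact_mod_cast hm0
    obtain ⟨hd1, hprod⟩ := pairing_facts bV D hαΦ hδΦ hnp hc1
    have hm3 : m ≤ 3 := by
      have h5 : D.coroot δ α ≤ 3 := by nlinarith
      rw [hm] at h5
      exact_mod_cast h5
    interval_cases m
    · -- m = 1
      have h1 : α - D.coroot δ α • δ = α - δ := by rw [hm]; push_cast; rw [one_smul]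
      rw [h1] at hsPos ⊢
      exact hlow α hα δ hδPos hsPos
    · -- m = 2
      have hc2 : (2:ℚ) ≤ D.coroot δ α := by rw [hm]; norm_num
      have hΦ1 : α - δ ∈ D.Φ := sub_root_of_two_le bV D hαΦ hδΦ hnp hc2
      have hP1 : α - δ ∈ D.Pos := by
        have h6 := D.sub_smul_mem_pos (t := 1) hαPos hδΔ hnp (by rwa [one_smul])
        rwa [one_smul] at h6
      have hI1 : α - δ ∈ I := hlow α hα δ hδPos hP1
      have h2 : α - D.coroot δ α • δ = (α - δ) - δ := by rw [hm]; push_cast; module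
      rw [h2] at hsPos ⊢
      exact hlow _ hI1 δ hδPos hsPos
    · -- m = 3
      have hc2 : (2:ℚ) ≤ D.coroot δ α := by rw [hm]; norm_num
      have hΦ1 : α - δ ∈ D.Φ := sub_root_of_two_le bV D hαΦ hδΦ hnp hc2
      have hP1 : α - δ ∈ D.Pos := by
        have h6 := D.sub_smul_mem_pos (t := 1) hαPos hδΔ hnp (by rwa [one_smul])
        rwa [one_smul] at h6
      have hI1 : α - δ ∈ I := hlow α hα δ hδPos hP1
      have e1 : D.coroot δ (α - δ) = 1 := by
        rw [map_sub, D.coroot_self δ hδΦ, hm]; push_cast; ring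
      have hΦ2' := D.reflect_mem δ hδΦ (α - δ) hΦ1
      rw [e1, one_smul] at hΦ2'
      rw [show (α - δ) - δ = α - (2:ℚ) • δ by module] at hΦ2'
      have hP2 : α - (2:ℚ)•δ ∈ D.Pos := D.sub_smul_mem_pos hαPos hδΔ hnp hΦ2'
      have hI2 : (α - δ) - δ ∈ I := by
        rw [show α - (2:ℚ)•δ = (α - δ) - δ by module] at hP2
        exact hlow _ hI1 δ hδPos hP2
      have h3 : α - D.coroot δ α • δ = ((α - δ) - δ) - δ := by rw [hm]; push_cast; module
      rw [h3] at hsPos ⊢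
      exact hlow _ hI2 δ hδPos hsPos

include bV in
lemma wtheta_stab {Θ I : Finset V} (hΘ : Θ ⊆ D.Δ) (hI : IsThetaIdealOf D.Pos Θ I)
    {w : V ≃ₗ[ℚ] V} (hw : w ∈ WThetaGroup D Θ) :
    ∀ x : V, (x ∈ I ∨ -x ∈ I) → (w x ∈ I ∨ -(w x) ∈ I) := by
  induction hw using Subgroup.closure_induction with
  | mem g hg =>
    obtain ⟨δ, hδ, hgδ⟩ := hg
    intro x hx
    rcases hx with hx | hx
    · rw [hgδ x]
      exact D.reflect_stab bV hΘ hI hδ hx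
    · have h1 := D.reflect_stab bV hΘ hI hδ hx
      have h2 : -x - D.coroot δ (-x) • δ = -(g x) := by
        rw [hgδ x, map_neg]; module
      rw [h2] at h1
      rcases h1 with h1 | h1
      · right; exact h1
      · left; rwa [neg_neg] at h1
  | one => intro x hx; exact hx
  | mul a b ha hb iha ihb => intro x hx; exact iha _ (ihb x hx)
  | inv a ha iha =>
    intro y hy
    set J : Finset V := I ∪ I.image (fun z => -z) with hJdef
    have hJ : ∀ z : V, z ∈ J ↔ (z ∈ I ∨ -z ∈ I) := by
      intro z
      rw [hJdef, Finset.mem_union, Finset.mem_image]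
      constructor
      · rintro (h | ⟨u, hu, rfl⟩)
        · exact Or.inl h
        · right; rwa [neg_neg]
      · rintro (h | h)
        · exact Or.inl h
        · exact Or.inr ⟨-z, h, by rw [neg_neg]⟩
    have hmaps : ∀ z ∈ J, a z ∈ J := fun z hz => (hJ _).mpr (iha z ((hJ z).mp hz))
    have hsub : J.image (fun z => a z) ⊆ J := by
      intro u hu
      obtain ⟨z, hz, rfl⟩ := Finset.mem_image.mp hu
      exact hmaps z hz
    have hcard : J.card ≤ (J.image (fun z => a z)).card := by
      rw [Finset.card_image_of_injective _ a.injective]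
    have himg : J.image (fun z => a z) = J := Finset.eq_of_subset_of_card_le hsub hcard
    have hyJ : y ∈ J.image (fun z => a z) := by rw [himg]; exact (hJ y).mpr hy
    obtain ⟨z, hz, hzy⟩ := Finset.mem_image.mp hyJ
    have h3 : a⁻¹ y = z := by rw [← hzy]; exact a.symm_apply_apply z
    rw [h3]
    exact (hJ z).mp hz

end Bform

section Alg
variable (bV : Module.Basis κ ℚ V)

lemma embR_basis (i : κ) : embR bV (bV i) = MvPolynomial.X i := by
  unfold embR
  simp [Module.Basis.repr_self, Finsupp.linearCombination_single]

lemma liftW_X (w : V ≃ₗ[ℚ] V) (i : κ) :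
    liftW bV w (MvPolynomial.X i) = embR bV (w (bV i)) := by
  unfold liftW
  simp [MvPolynomial.aeval_X]

lemma liftW_embR (w : V ≃ₗ[ℚ] V) (v : V) :
    liftW bV w (embR bV v) = embR bV (w v) := by
  have h : ((liftW bV w).toLinearMap.comp (embR bV)) = (embR bV).comp (w : V →ₗ[ℚ] V) := by
    apply bV.ext
    intro i
    simp [embR_basis, liftW_X]
  exact LinearMap.congr_fun h v

lemma liftW_mul (w u : V ≃ₗ[ℚ] V) (f : MvPolynomial κ ℚ) :
    liftW bV w (liftW bV u f) = liftW bV (w * u) f := by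
  have h : (liftW bV w).comp (liftW bV u) = liftW bV (w * u) := by
    apply MvPolynomial.algHom_ext
    intro i
    simp only [AlgHom.coe_comp, Function.comp_apply, liftW_X, liftW_embR]
    rfl
  exact AlgHom.congr_fun h f

lemma liftW_one (f : MvPolynomial κ ℚ) : liftW bV 1 f = f := by
  have h : liftW bV (1 : V ≃ₗ[ℚ] V) = AlgHom.id ℚ (MvPolynomial κ ℚ) := by
    apply MvPolynomial.algHom_ext
    intro i
    simp only [liftW_X, AlgHom.coe_id, id_eq]
    exact embR_basis bV i
  rw [h]; rfl

lemma liftW_inv_cancel (w : V ≃ₗ[ℚ] V) (f : MvPolynomial κ ℚ) :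
    liftW bV w (liftW bV w⁻¹ f) = f := by
  rw [liftW_mul, mul_inv_cancel, liftW_one]

lemma actDer_comp (w u : V ≃ₗ[ℚ] V) (ψ : MvPolynomial κ ℚ → MvPolynomial κ ℚ) :
    actDer bV w (actDer bV u ψ) = actDer bV (w * u) ψ := by
  funext f
  unfold actDer
  rw [liftW_mul, liftW_mul, mul_inv_rev]

lemma actDer_isDeriv (w : V ≃ₗ[ℚ] V) {ψ : MvPolynomial κ ℚ → MvPolynomial κ ℚ}
    (hψ : IsDerivFn ψ) : IsDerivFn (actDer bV w ψ) := by
  obtain ⟨⟨hadd, hsmul⟩, hleib⟩ := hψ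
  refine ⟨⟨?_, ?_⟩, ?_⟩
  · intro f g
    unfold actDer
    rw [map_add, hadd, map_add]
  · intro c f
    unfold actDer
    rw [map_smul, hsmul, map_smul]
  · intro f g
    unfold actDer
    rw [map_mul, hleib, map_add, map_mul, map_mul, liftW_inv_cancel, liftW_inv_cancel]

lemma actDer_logder {I : Finset V} (w : V ≃ₗ[ℚ] V)
    (hstab : ∀ α ∈ I, w⁻¹ α ∈ I ∨ -(w⁻¹ α) ∈ I)
    {ψ : MvPolynomial κ ℚ → MvPolynomial κ ℚ} (hψ : InLogDer bV I ψ) :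
    InLogDer bV I (actDer bV w ψ) := by
  refine ⟨actDer_isDeriv bV w hψ.1, ?_⟩
  intro α hα
  have hww : w (w⁻¹ α) = α := w.apply_symm_apply α
  rcases hstab α hα with hmem | hmem
  · obtain ⟨r, hr⟩ := hψ.2 _ hmem
    refine ⟨liftW bV w r, ?_⟩
    unfold actDer
    rw [liftW_embR, hr, map_mul, liftW_embR, hww]
  · obtain ⟨r, hr⟩ := hψ.2 _ hmem
    refine ⟨liftW bV w r, ?_⟩
    unfold actDer
    rw [liftW_embR]
    have h1 : embR bV (w⁻¹ α) = -embR bV (-(w⁻¹ α)) := by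
      rw [map_neg, neg_neg]
    rw [h1, IsLinearMap.map_neg hψ.1.1, hr, map_neg, map_mul, liftW_embR]
    have h2 : w (-(w⁻¹ α)) = -α := by rw [map_neg, hww]
    rw [h2, map_neg]
    ring

end Alg

end RootSystemData

/-- Let `Θ ⊆ Δ` and let `I` be a `Θ`-ideal in `Φ⁺`, and let `Q` be a
fixed `W`-invariant element of `Sym²(V) ⊂ R`. Then `a(I)_Θ = a(I) ∩ R^{W_Θ}`: an
element `f` of the invariant ring `R^{W_Θ}` can be written as `f = ψ(Q)` for some
`ψ ∈ D(A_I)` if and only if it can be written as `f = ψ'(Q)` for some `W_Θ`-invariant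
derivation `ψ' ∈ D(A_I)^{W_Θ}`. -/
theorem aIdealTheta_eq_aIdeal_inter_invariants
    (D : RootSystemData V) (bV : Module.Basis κ ℚ V)
    (Θ : Finset V) (hΘ : Θ ⊆ D.Δ)
    (I : Finset V) (hI : IsThetaIdealOf D.Pos Θ I)
    (Q : MvPolynomial κ ℚ) (hQ2 : Q.IsHomogeneous 2)
    (hQW : ∀ w ∈ WeylGroup D, liftW bV w Q = Q) :
    {f : MvPolynomial κ ℚ | ∃ ψ, InLogDer bV I ψ ∧
        (∀ w ∈ WThetaGroup D Θ, actDer bV w ψ = ψ) ∧ ψ Q = f} =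
      {f : MvPolynomial κ ℚ | (∃ ψ, InLogDer bV I ψ ∧ ψ Q = f) ∧
        ∀ w ∈ WThetaGroup D Θ, liftW bV w f = f} := by
  haveI hFD : FiniteDimensional ℚ V := by
    have h1 : FiniteDimensional ℚ (Submodule.span ℚ (D.Φ : Set V)) :=
      FiniteDimensional.span_of_finite ℚ D.Φ.finite_toSet
    exact Module.Finite.equiv (LinearEquiv.ofTop _ D.span_eq_top)
  haveI hκ : Fintype κ := FiniteDimensional.fintypeBasisIndex bV
  haveI hWfin : Fintype (WeylGroup D) := @Fintype.ofFinite _ D.weyl_finite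
  have hsubgrp : WThetaGroup D Θ ≤ WeylGroup D := by
    apply Subgroup.closure_mono
    rintro g ⟨δ, hδ, hgδ⟩
    exact ⟨δ, D.pos_subset (D.simple_subset (hΘ hδ)), hgδ⟩
  haveI hGfin : Finite (WThetaGroup D Θ) :=
    Finite.of_injective (Subgroup.inclusion hsubgrp) (Subgroup.inclusion_injective hsubgrp)
  haveI hGfin' : Fintype (WThetaGroup D Θ) := Fintype.ofFinite _
  haveI hGne : Nonempty (WThetaGroup D Θ) := ⟨1⟩
  ext f
  simp only [Set.mem_setOf_eq]
  constructor
  · rintro ⟨ψ, hlog, hinv, rfl⟩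
    refine ⟨⟨ψ, hlog, rfl⟩, ?_⟩
    intro w hw
    have h1 : liftW bV w⁻¹ Q = Q := hQW _ (inv_mem (hsubgrp hw))
    have h2 := congrFun (hinv w hw) Q
    calc liftW bV w (ψ Q) = liftW bV w (ψ (liftW bV w⁻¹ Q)) := by rw [h1]
    _ = actDer bV w ψ Q := rfl
    _ = ψ Q := h2
  · rintro ⟨⟨ψ, hlog, rfl⟩, hf⟩
    set G := WThetaGroup D Θ with hG
    set n : ℕ := Fintype.card G with hn
    have hn0 : (n : ℚ) ≠ 0 := Nat.cast_ne_zero.mpr Fintype.card_ne_zero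
    set ψ' : MvPolynomial κ ℚ → MvPolynomial κ ℚ :=
      fun p => (n : ℚ)⁻¹ • ∑ w : G, actDer bV (w : V ≃ₗ[ℚ] V) ψ p with hψ'
    have hstab : ∀ w : G, ∀ α ∈ I, (w : V ≃ₗ[ℚ] V)⁻¹ α ∈ I ∨ -((w : V ≃ₗ[ℚ] V)⁻¹ α) ∈ I := by
      intro w α hα
      exact D.wtheta_stab bV hΘ hI (inv_mem w.2) α (Or.inl hα)
    have hterm : ∀ w : G, InLogDer bV I (actDer bV (w : V ≃ₗ[ℚ] V) ψ) :=
      fun w => RootSystemData.actDer_logder bV _ (hstab w) hlog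
    refine ⟨ψ', ⟨⟨⟨?_, ?_⟩, ?_⟩, ?_⟩, ?_, ?_⟩
    · -- additivity
      intro p q
      rw [hψ']
      simp only
      rw [← smul_add, ← Finset.sum_add_distrib]
      congr 1
      exact Finset.sum_congr rfl fun w _ => (hterm w).1.1.1 p q
    · -- smul
      intro c p
      rw [hψ']
      simp only
      rw [show (∑ w : G, actDer bV (w : V ≃ₗ[ℚ] V) ψ (c • p))
          = ∑ w : G, c • actDer bV (w : V ≃ₗ[ℚ] V) ψ p from
        Finset.sum_congr rfl fun w _ => (hterm w).1.1.2 c p]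
      rw [← Finset.smul_sum, smul_comm]
    · -- Leibniz
      intro p q
      rw [hψ']
      simp only
      rw [show (∑ w : G, actDer bV (w : V ≃ₗ[ℚ] V) ψ (p * q))
          = ∑ w : G, (actDer bV (w : V ≃ₗ[ℚ] V) ψ p * q
            + p * actDer bV (w : V ≃ₗ[ℚ] V) ψ q) from
        Finset.sum_congr rfl fun w _ => (hterm w).1.2 p q]
      rw [Finset.sum_add_distrib, smul_add, ← Finset.sum_mul, ← Finset.mul_sum,
        smul_mul_assoc, mul_smul_comm]
    · -- log condition
      intro α hα
      have hch : ∀ w : G, ∃ r : MvPolynomial κ ℚ,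
          actDer bV (w : V ≃ₗ[ℚ] V) ψ (embR bV α) = r * embR bV α :=
        fun w => (hterm w).2 α hα
      choose r hr using hch
      refine ⟨(n : ℚ)⁻¹ • ∑ w : G, r w, ?_⟩
      rw [hψ']
      simp only
      rw [Finset.sum_congr rfl fun w _ => hr w, ← Finset.sum_mul, smul_mul_assoc]
    · -- invariance
      intro w hw
      funext p
      have hcomp : ∀ u : G, liftW bV w (actDer bV (u : V ≃ₗ[ℚ] V) ψ (liftW bV w⁻¹ p))
          = actDer bV (w * (u : V ≃ₗ[ℚ] V)) ψ p := by
        intro u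
        have := congrFun (RootSystemData.actDer_comp bV w (u : V ≃ₗ[ℚ] V) ψ) p
        exact this
      show liftW bV w (ψ' (liftW bV w⁻¹ p)) = ψ' p
      rw [hψ']
      simp only
      rw [map_smul, map_sum]
      rw [Finset.sum_congr rfl fun u _ => hcomp u]
      refine congrArg (fun s => (n : ℚ)⁻¹ • s) ?_
      refine Fintype.sum_equiv (Equiv.mulLeft (⟨w, hw⟩ : G)) _ _ fun u => ?_
      rfl
    · -- value at Q
      have hterms : ∀ u : G, actDer bV (u : V ≃ₗ[ℚ] V) ψ Q = ψ Q := by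
        intro u
        show liftW bV (u : V ≃ₗ[ℚ] V) (ψ (liftW bV (u : V ≃ₗ[ℚ] V)⁻¹ Q)) = ψ Q
        rw [hQW _ (inv_mem (hsubgrp u.2)), hf _ u.2]
      rw [hψ']
      simp only
      rw [Finset.sum_congr rfl fun u _ => hterms u, Finset.sum_const, Finset.card_univ]
      rw [← hn, ← Nat.cast_smul_eq_nsmul ℚ n (ψ Q), inv_smul_smul₀ hn0]


end
end

section
/- Let Θ ⊆ Δ and let I be a Θ-ideal in Φ⁺. If Q and Q' are two W-invariant elements of Sym²(V) whose associated symmetric bilinear forms on V are nondegenerate, then the ideals of R^{W_Θ} defined by them coincide: {ψ(Q) : ψ ∈ D(A_I)^{W_Θ}} = {ψ(Q') : ψ ∈ D(A_I)^{W_Θ}}; i.e., the ideal a(I)_Θ does not depend on the choice of W-invariant nondegenerate quadratic form Q. -/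
open scoped Classical

noncomputable section

variable (V : Type) [AddCommGroup V] [Module ℚ V]

variable {V}

variable {V : Type} [AddCommGroup V] [Module ℚ V] {κ : Type}

/-! ### Auxiliary machinery -/

namespace AIdealAux

open MvPolynomial

section FinsuppDeg

variable {κ : Type}

lemma finsupp_sum_zero {m : κ →₀ ℕ} (h : (m.sum fun _ e => e) = 0) : m = 0 := by
  ext a
  by_contra ha
  have hmem : a ∈ m.support := Finsupp.mem_support_iff.2 (by simpa using ha)
  have h0 : ∑ i ∈ m.support, m i = 0 := by simpa [Finsupp.sum] using h
  exact ha (by simpa using (Finset.sum_eq_zero_iff.mp h0) a hmem)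

lemma finsupp_sum_one {m : κ →₀ ℕ} (h : (m.sum fun _ e => e) = 1) :
    ∃ i, m = Finsupp.single i 1 := by
  induction m using Finsupp.induction with
  | zero => simp at h
  | single_add a b f _ hb _ =>
    rw [Finsupp.sum_add_index' (fun _ => rfl) (fun _ _ _ => rfl),
      Finsupp.sum_single_index rfl] at h
    have hb1 : b = 1 ∧ (f.sum fun _ e => e) = 0 := by omega
    rcases hb1 with ⟨rfl, hf0⟩
    rw [finsupp_sum_zero hf0, add_zero]
    exact ⟨a, rfl⟩

lemma finsupp_sum_two {m : κ →₀ ℕ} (h : (m.sum fun _ e => e) = 2) :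
    ∃ i j, m = Finsupp.single i 1 + Finsupp.single j 1 := by
  induction m using Finsupp.induction with
  | zero => simp at h
  | single_add a b f _ hb _ =>
    rw [Finsupp.sum_add_index' (fun _ => rfl) (fun _ _ _ => rfl),
      Finsupp.sum_single_index rfl] at h
    rcases (by omega : b = 2 ∧ (f.sum fun _ e => e) = 0 ∨
        b = 1 ∧ (f.sum fun _ e => e) = 1) with ⟨rfl, hf⟩ | ⟨rfl, hf⟩
    · rw [finsupp_sum_zero hf, add_zero]
      exact ⟨a, a, by rw [← Finsupp.single_add]⟩
    · obtain ⟨j, rfl⟩ := finsupp_sum_one hf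
      exact ⟨a, j, rfl⟩

lemma monomial_two_eq {m : κ →₀ ℕ} (hm : (m.sum fun _ e => e) = 2) (c : ℚ) :
    ∃ i j, (monomial m c : MvPolynomial κ ℚ) = C c * X i * X j := by
  obtain ⟨i, j, rfl⟩ := finsupp_sum_two hm
  refine ⟨i, j, ?_⟩
  rw [mul_assoc, X, X, monomial_mul, C_mul_monomial]
  simp

end FinsuppDeg


section Polar

variable {κ : Type} [Fintype κ]

lemma polar_eval {Q : MvPolynomial κ ℚ} (hQ : Q.IsHomogeneous 2) (x y : κ → ℚ) :
    eval (x + y) Q = eval x Q + eval y Q + ∑ i, y i * eval x ((pderiv i) Q) := by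
  classical
  have key : ∀ (c : ℚ) (i j : κ),
      eval (x + y) (C c * X i * X j : MvPolynomial κ ℚ)
        = eval x (C c * X i * X j) + eval y (C c * X i * X j)
          + ∑ k, y k * eval x ((pderiv k) (C c * X i * X j)) := by
    intro c i j
    have hps : ∀ k, eval x ((pderiv k) (C c * X i * X j : MvPolynomial κ ℚ))
        = c * ((if i = k then x j else 0) + (if j = k then x i else 0)) := by
      intro k
      rw [mul_assoc, pderiv_C_mul, pderiv_mul, pderiv_X, pderiv_X]
      by_cases hki : i = k <;> by_cases hkj : j = k <;>
        simp [Pi.single_apply, hki, hkj] <;> try ring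
    simp only [hps, eval_mul, eval_add, eval_C, eval_X, Pi.add_apply]
    have hsum : ∑ k, y k * (c * ((if i = k then x j else 0) + (if j = k then x i else 0)))
        = y i * (c * x j) + y j * (c * x i) := by
      have h1 : ∀ k, y k * (c * ((if i = k then x j else 0) + (if j = k then x i else 0)))
          = (if i = k then y k * (c * x j) else 0) + (if j = k then y k * (c * x i) else 0) := by
        intro k
        by_cases hki : i = k <;> by_cases hkj : j = k <;> simp [hki, hkj] <;> ring
      rw [Finset.sum_congr rfl fun k _ => h1 k, Finset.sum_add_distrib,
        Finset.sum_ite_eq Finset.univ i, Finset.sum_ite_eq Finset.univ j]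
      simp
    rw [hsum]
    ring
  have Padd : ∀ p q : MvPolynomial κ ℚ,
      (eval (x + y) p = eval x p + eval y p + ∑ i, y i * eval x ((pderiv i) p)) →
      (eval (x + y) q = eval x q + eval y q + ∑ i, y i * eval x ((pderiv i) q)) →
      (eval (x + y) (p + q)
        = eval x (p + q) + eval y (p + q) + ∑ i, y i * eval x ((pderiv i) (p + q))) := by
    intro p q hp hq
    simp only [map_add, mul_add, Finset.sum_add_distrib] at *
    rw [hp, hq]; ring
  have P0 : eval (x + y) (0 : MvPolynomial κ ℚ)
      = eval x 0 + eval y 0 + ∑ i, y i * eval x ((pderiv i) (0 : MvPolynomial κ ℚ)) := by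
    simp
  have Pmono : ∀ m ∈ Q.support,
      eval (x + y) (monomial m (coeff m Q))
        = eval x (monomial m (coeff m Q)) + eval y (monomial m (coeff m Q))
          + ∑ i, y i * eval x ((pderiv i) (monomial m (coeff m Q))) := by
    intro m hm
    have hdeg : (m.sum fun _ e => e) = 2 := by
      have := hQ (MvPolynomial.mem_support_iff.mp hm)
      simpa [Finsupp.weight, Finsupp.linearCombination, Finsupp.sum] using this
    obtain ⟨i, j, hij⟩ := monomial_two_eq hdeg (coeff m Q)
    rw [hij]
    exact key _ _ _
  calc eval (x + y) Q
      = eval (x + y) (∑ m ∈ Q.support, monomial m (coeff m Q)) := by rw [← Q.as_sum]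
    _ = eval x (∑ m ∈ Q.support, monomial m (coeff m Q))
          + eval y (∑ m ∈ Q.support, monomial m (coeff m Q))
          + ∑ i, y i * eval x ((pderiv i) (∑ m ∈ Q.support, monomial m (coeff m Q))) :=
        Finset.sum_induction _ _ Padd P0 Pmono
    _ = eval x Q + eval y Q + ∑ i, y i * eval x ((pderiv i) Q) := by rw [← Q.as_sum]

end Polar


section Deriv

variable {V : Type} [AddCommGroup V] [Module ℚ V] {κ : Type}

lemma derivFn_one {ψ : MvPolynomial κ ℚ → MvPolynomial κ ℚ} (h : IsDerivFn ψ) :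
    ψ 1 = 0 := by
  have h1 := h.2 1 1
  rw [mul_one, mul_one, one_mul] at h1
  exact (left_eq_add.mp h1)

lemma derivFn_C {ψ : MvPolynomial κ ℚ → MvPolynomial κ ℚ} (h : IsDerivFn ψ) (a : ℚ) :
    ψ (C a) = 0 := by
  have hC : (C a : MvPolynomial κ ℚ) = a • (1 : MvPolynomial κ ℚ) := by
    rw [smul_eq_C_mul, mul_one]
  rw [hC, h.1.map_smul, derivFn_one h, smul_zero]

lemma derivFn_ext {ψ φ : MvPolynomial κ ℚ → MvPolynomial κ ℚ}
    (hψ : IsDerivFn ψ) (hφ : IsDerivFn φ) (h : ∀ i : κ, ψ (X i) = φ (X i)) :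
    ∀ f, ψ f = φ f := by
  intro f
  induction f using MvPolynomial.induction_on with
  | C a => rw [derivFn_C hψ, derivFn_C hφ]
  | add p q hp hq => rw [hψ.1.map_add, hφ.1.map_add, hp, hq]
  | mul_X p i hp => rw [hψ.2, hφ.2, hp, h]

def mkDer [Fintype κ] (a : κ → MvPolynomial κ ℚ) (f : MvPolynomial κ ℚ) :
    MvPolynomial κ ℚ :=
  ∑ i, a i * (pderiv i) f

lemma mkDer_isDeriv [Fintype κ] (a : κ → MvPolynomial κ ℚ) : IsDerivFn (mkDer a) := by
  constructor
  · constructor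
    · intro f g
      simp [mkDer, mul_add, Finset.sum_add_distrib]
    · intro c f
      simp only [mkDer, Derivation.map_smul, Finset.smul_sum, mul_smul_comm]
  · intro f g
    simp only [mkDer, pderiv_mul, mul_add, Finset.sum_add_distrib, Finset.sum_mul,
      Finset.mul_sum]
    congr 1
    · exact Finset.sum_congr rfl fun i _ => by ring
    · exact Finset.sum_congr rfl fun i _ => by ring

lemma mkDer_X [Fintype κ] (a : κ → MvPolynomial κ ℚ) (j : κ) :
    mkDer a (X j) = a j := by
  classical
  have h1 : ∀ i : κ, a i * (pderiv i) (X j : MvPolynomial κ ℚ)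
      = if i = j then a i else 0 := by
    intro i
    rw [pderiv_X, Pi.single_apply]
    rcases eq_or_ne i j with h | h
    · subst h; simp
    · simp [h, Ne.symm h]
  rw [mkDer, Finset.sum_congr rfl fun i _ => h1 i, Finset.sum_ite_eq' Finset.univ j]
  simp

lemma derivFn_expand [Fintype κ] {ψ : MvPolynomial κ ℚ → MvPolynomial κ ℚ}
    (hψ : IsDerivFn ψ) (f : MvPolynomial κ ℚ) :
    ψ f = ∑ i, ψ (X i) * (pderiv i) f :=
  derivFn_ext hψ (mkDer_isDeriv _) (fun i => (mkDer_X (fun k => ψ (X k)) i).symm) f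

end Deriv

section EmbR

variable {V : Type} [AddCommGroup V] [Module ℚ V] {κ : Type}

lemma embR_basis (bV : Module.Basis κ ℚ V) (i : κ) : embR bV (bV i) = X i := by
  simp [embR, Module.Basis.repr_self]

lemma embR_sum [Fintype κ] (bV : Module.Basis κ ℚ V) (v : V) :
    embR bV v = ∑ j, bV.repr v j • X j := by
  rw [embR]
  simp only [LinearMap.coe_comp, Function.comp_apply, LinearEquiv.coe_coe,
    Finsupp.linearCombination_apply]
  exact Finsupp.sum_fintype _ _ (fun i => zero_smul ℚ _)

lemma eval_embR [Fintype κ] (bV : Module.Basis κ ℚ V) (x : κ → ℚ) (v : V) :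
    eval x (embR bV v) = ∑ j, bV.repr v j * x j := by
  rw [embR_sum, map_sum]
  exact Finset.sum_congr rfl fun j _ => by rw [smul_eq_C_mul, eval_mul, eval_C, eval_X]

lemma pderiv_embR [Fintype κ] (bV : Module.Basis κ ℚ V) (i : κ) (v : V) :
    (pderiv i) (embR bV v) = C (bV.repr v i) := by
  classical
  rw [embR_sum, map_sum]
  have h1 : ∀ j : κ, (pderiv i) (bV.repr v j • X j)
      = if j = i then C (bV.repr v j) else 0 := by
    intro j
    rw [smul_eq_C_mul, pderiv_C_mul, pderiv_X, Pi.single_apply]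
    by_cases hji : j = i <;> simp [hji]
  rw [Finset.sum_congr rfl fun j _ => h1 j, Finset.sum_ite_eq' Finset.univ i]
  simp

lemma derivFn_embR [Fintype κ] {ψ : MvPolynomial κ ℚ → MvPolynomial κ ℚ}
    (hψ : IsDerivFn ψ) (bV : Module.Basis κ ℚ V) (v : V) :
    ψ (embR bV v) = ∑ j, bV.repr v j • ψ (X j) := by
  let ψL : MvPolynomial κ ℚ →ₗ[ℚ] MvPolynomial κ ℚ := IsLinearMap.mk' ψ hψ.1
  have hψL : ∀ f, ψL f = ψ f := fun f => rfl
  rw [embR_sum, ← hψL, map_sum]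
  exact Finset.sum_congr rfl fun j _ => by rw [map_smul, hψL]

end EmbR

section LiftW

variable {V : Type} [AddCommGroup V] [Module ℚ V] {κ : Type}

lemma liftW_X (bV : Module.Basis κ ℚ V) (w : V ≃ₗ[ℚ] V) (i : κ) :
    liftW bV w (X i) = embR bV (w (bV i)) := by
  simp [liftW]

lemma liftW_embR [Fintype κ] (bV : Module.Basis κ ℚ V) (w : V ≃ₗ[ℚ] V) (v : V) :
    liftW bV w (embR bV v) = embR bV (w v) := by
  rw [embR_sum, map_sum]
  have h1 : ∀ j : κ, liftW bV w (bV.repr v j • X j) = bV.repr v j • embR bV (w (bV j)) :=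
    fun j => by rw [map_smul, liftW_X]
  rw [Finset.sum_congr rfl fun j _ => h1 j]
  have h2 : ∑ j, bV.repr v j • embR bV (w (bV j)) = embR bV (∑ j, bV.repr v j • w (bV j)) := by
    rw [map_sum]
    exact Finset.sum_congr rfl fun j _ => (map_smul (embR bV) _ _).symm
  rw [h2]
  congr 1
  calc ∑ j, bV.repr v j • w (bV j) = w (∑ j, bV.repr v j • bV j) := by
        rw [map_sum]
        exact Finset.sum_congr rfl fun j _ => (map_smul w _ _).symm
    _ = w v := by rw [Module.Basis.sum_repr]

lemma liftW_liftW [Fintype κ] (bV : Module.Basis κ ℚ V) (w w' : V ≃ₗ[ℚ] V)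
    (f : MvPolynomial κ ℚ) :
    liftW bV w (liftW bV w' f) = liftW bV (w * w') f := by
  induction f using MvPolynomial.induction_on with
  | C a => simp [liftW]
  | add p q hp hq => simp only [map_add, hp, hq]
  | mul_X p i hp =>
    simp only [map_mul, hp, liftW_X, liftW_embR]
    rfl

lemma liftW_one [Fintype κ] (bV : Module.Basis κ ℚ V) (f : MvPolynomial κ ℚ) :
    liftW bV (1 : V ≃ₗ[ℚ] V) f = f := by
  induction f using MvPolynomial.induction_on with
  | C a => simp [liftW]
  | add p q hp hq => simp only [map_add, hp, hq]
  | mul_X p i hp =>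
    simp only [map_mul, hp, liftW_X]
    have h1 : (1 : V ≃ₗ[ℚ] V) (bV i) = bV i := rfl
    rw [h1, embR_basis]

lemma liftW_cancel [Fintype κ] (bV : Module.Basis κ ℚ V) (w : V ≃ₗ[ℚ] V)
    (f : MvPolynomial κ ℚ) :
    liftW bV w (liftW bV w⁻¹ f) = f := by
  rw [liftW_liftW, mul_inv_cancel, liftW_one]

lemma actDer_isDeriv [Fintype κ] (bV : Module.Basis κ ℚ V) (w : V ≃ₗ[ℚ] V)
    {ψ : MvPolynomial κ ℚ → MvPolynomial κ ℚ} (h : IsDerivFn ψ) :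
    IsDerivFn (actDer bV w ψ) := by
  constructor
  · constructor
    · intro f g
      simp only [actDer, map_add, h.1.map_add]
    · intro c f
      simp only [actDer, map_smul, h.1.map_smul]
  · intro f g
    simp only [actDer, map_mul]
    rw [h.2, map_add, map_mul, map_mul, liftW_cancel, liftW_cancel]

end LiftW


section Bform

variable {V : Type} [AddCommGroup V] [Module ℚ V] {κ : Type}

/-- coordinates of `v` in the basis `b`, as a function. -/
def coords (b : Module.Basis κ ℚ V) (v : V) : κ → ℚ := fun i => b.repr v i

lemma polyQuadForm_eq (b : Module.Basis κ ℚ V) (Q : MvPolynomial κ ℚ) (v : V) :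
    polyQuadForm b Q v = eval (coords b v) Q := rfl

lemma coords_add (b : Module.Basis κ ℚ V) (u v : V) :
    coords b (u + v) = coords b u + coords b v := by
  funext i; simp [coords]

/-- The symmetric bilinear form associated with a homogeneous quadratic `Q`. -/
def Bform [Fintype κ] (b : Module.Basis κ ℚ V) (Q : MvPolynomial κ ℚ) (u v : V) : ℚ :=
  ∑ i, b.repr u i * eval (coords b v) ((pderiv i) Q)

lemma Bform_polar [Fintype κ] (b : Module.Basis κ ℚ V) {Q : MvPolynomial κ ℚ}
    (hQ : Q.IsHomogeneous 2) (u v : V) :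
    Bform b Q u v = polyQuadForm b Q (v + u) - polyQuadForm b Q v - polyQuadForm b Q u := by
  have h := polar_eval hQ (coords b v) (coords b u)
  rw [polyQuadForm_eq, polyQuadForm_eq, polyQuadForm_eq, coords_add, h, Bform]
  simp only [coords]
  ring

lemma Bform_symm [Fintype κ] (b : Module.Basis κ ℚ V) {Q : MvPolynomial κ ℚ}
    (hQ : Q.IsHomogeneous 2) (u v : V) :
    Bform b Q u v = Bform b Q v u := by
  rw [Bform_polar b hQ u v, Bform_polar b hQ v u, add_comm v u]
  ring

lemma Bform_basis [Fintype κ] (b : Module.Basis κ ℚ V) (Q : MvPolynomial κ ℚ) (j : κ) (v : V) :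
    Bform b Q (b j) v = eval (coords b v) ((pderiv j) Q) := by
  classical
  rw [Bform]
  have h1 : ∀ i : κ, b.repr (b j) i * eval (coords b v) ((pderiv i) Q)
      = if i = j then eval (coords b v) ((pderiv i) Q) else 0 := by
    intro i
    rw [Module.Basis.repr_self, Finsupp.single_apply]
    rcases eq_or_ne i j with h | h
    · subst h; simp
    · simp [h, Ne.symm h]
  rw [Finset.sum_congr rfl fun i _ => h1 i, Finset.sum_ite_eq' Finset.univ j]
  simp

lemma Bform_expand_left [Fintype κ] (b : Module.Basis κ ℚ V) (Q : MvPolynomial κ ℚ) (u v : V) :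
    Bform b Q u v = ∑ i, b.repr u i * Bform b Q (b i) v := by
  rw [Bform]
  exact Finset.sum_congr rfl fun i _ => by rw [Bform_basis]

lemma Bform_expand_right [Fintype κ] (b : Module.Basis κ ℚ V) {Q : MvPolynomial κ ℚ}
    (hQ : Q.IsHomogeneous 2) (u v : V) :
    Bform b Q u v = ∑ j, b.repr v j * Bform b Q u (b j) := by
  rw [Bform_symm b hQ, Bform_expand_left]
  exact Finset.sum_congr rfl fun j _ => by rw [Bform_symm b hQ]

lemma Bform_sub_left [Fintype κ] (b : Module.Basis κ ℚ V) (Q : MvPolynomial κ ℚ) (u u' v : V) :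
    Bform b Q (u - u') v = Bform b Q u v - Bform b Q u' v := by
  simp [Bform, map_sub, sub_mul, Finset.sum_sub_distrib]

lemma Bform_add_left [Fintype κ] (b : Module.Basis κ ℚ V) (Q : MvPolynomial κ ℚ) (u u' v : V) :
    Bform b Q (u + u') v = Bform b Q u v + Bform b Q u' v := by
  simp [Bform, map_add, add_mul, Finset.sum_add_distrib]

lemma Bform_smul_left [Fintype κ] (b : Module.Basis κ ℚ V) (Q : MvPolynomial κ ℚ)
    (c : ℚ) (u v : V) :
    Bform b Q (c • u) v = c * Bform b Q u v := by
  simp [Bform, map_smul, Finset.mul_sum, mul_assoc]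

lemma Bform_nondeg [Fintype κ] (b : Module.Basis κ ℚ V) {Q : MvPolynomial κ ℚ}
    (hQ : Q.IsHomogeneous 2) (hnd : NondegQuad b Q) {a : V}
    (h : ∀ v, Bform b Q a v = 0) : a = 0 := by
  apply hnd
  intro u
  have h1 := Bform_polar b hQ u a
  rw [← Bform_symm b hQ a u, h u] at h1
  linarith [h1]

lemma Bform_cancel [Fintype κ] (b : Module.Basis κ ℚ V) {Q : MvPolynomial κ ℚ}
    (hQ : Q.IsHomogeneous 2) (hnd : NondegQuad b Q) {a a' : V}
    (h : ∀ v, Bform b Q a v = Bform b Q a' v) : a = a' := by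
  have h0 : ∀ v, Bform b Q (a - a') v = 0 := fun v => by
    rw [Bform_sub_left, h v, sub_self]
  exact sub_eq_zero.mp (Bform_nondeg b hQ hnd h0)

end Bform


section Tau

variable {V : Type} [AddCommGroup V] [Module ℚ V] {κ : Type}

lemma repr_sum [Fintype κ] (b : Module.Basis κ ℚ V) (c : κ → ℚ) (k : κ) :
    b.repr (∑ i, c i • b i) k = c k := by
  classical
  rw [map_sum]
  rw [Finsupp.finset_sum_apply]
  have h1 : ∀ i : κ, (b.repr (c i • b i)) k = if i = k then c i else 0 := by
    intro i
    rw [map_smul, Module.Basis.repr_self, Finsupp.smul_apply, Finsupp.single_apply]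
    rcases eq_or_ne i k with h | h
    · subst h; simp
    · simp [h]
  rw [Finset.sum_congr rfl fun i _ => h1 i, Finset.sum_ite_eq' Finset.univ k]
  simp

/-- transpose of `w` with respect to the coordinates of `b`. -/
def tau [Fintype κ] (b : Module.Basis κ ℚ V) (w : V ≃ₗ[ℚ] V) (v : V) : V :=
  ∑ i, (∑ j, b.repr (w (b i)) j * b.repr v j) • b i

lemma tau_repr [Fintype κ] (b : Module.Basis κ ℚ V) (w : V ≃ₗ[ℚ] V) (v : V) (k : κ) :
    b.repr (tau b w v) k = ∑ j, b.repr (w (b k)) j * b.repr v j :=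
  repr_sum b _ k

lemma tau_add [Fintype κ] (b : Module.Basis κ ℚ V) (w : V ≃ₗ[ℚ] V) (u v : V) :
    tau b w (u + v) = tau b w u + tau b w v := by
  rw [tau, tau, tau, ← Finset.sum_add_distrib]
  refine Finset.sum_congr rfl fun i _ => ?_
  rw [← add_smul]
  congr 1
  rw [← Finset.sum_add_distrib]
  refine Finset.sum_congr rfl fun j _ => ?_
  rw [map_add, Finsupp.add_apply, mul_add]

lemma repr_w [Fintype κ] (b : Module.Basis κ ℚ V) (w : V ≃ₗ[ℚ] V) (v : V) (j : κ) :
    b.repr (w v) j = ∑ k, b.repr v k * b.repr (w (b k)) j := by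
  conv_lhs => rw [← Module.Basis.sum_repr b v]
  rw [map_sum, map_sum, Finsupp.finset_sum_apply]
  refine Finset.sum_congr rfl fun k _ => ?_
  rw [map_smul, map_smul, Finsupp.smul_apply, smul_eq_mul]

lemma tau_tau [Fintype κ] (b : Module.Basis κ ℚ V) (w w' : V ≃ₗ[ℚ] V) (v : V) :
    tau b w (tau b w' v) = tau b (w' * w) v := by
  apply Module.Basis.ext_elem b
  intro k
  rw [tau_repr, tau_repr]
  have h1 : ∀ j, b.repr (tau b w' v) j = ∑ l, b.repr (w' (b j)) l * b.repr v l :=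
    fun j => tau_repr b w' v j
  have h2 : ∀ j, b.repr ((w' * w) (b k)) j = ∑ l, b.repr (w (b k)) l * b.repr (w' (b l)) j := by
    intro j
    have hww : (w' * w) (b k) = w' (w (b k)) := rfl
    rw [hww, repr_w]
  simp only [h1, h2]
  simp only [Finset.mul_sum, Finset.sum_mul]
  rw [Finset.sum_comm]
  exact Finset.sum_congr rfl fun j _ => Finset.sum_congr rfl fun l _ => by ring

lemma tau_one [Fintype κ] (b : Module.Basis κ ℚ V) (v : V) : tau b (1 : V ≃ₗ[ℚ] V) v = v := by
  apply Module.Basis.ext_elem b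
  intro k
  rw [tau_repr]
  have h1 : (1 : V ≃ₗ[ℚ] V) (b k) = b k := rfl
  rw [h1]
  classical
  have h2 : ∀ j, b.repr (b k) j * b.repr v j = if j = k then b.repr v j else 0 := by
    intro j
    rw [Module.Basis.repr_self, Finsupp.single_apply]
    rcases eq_or_ne j k with h | h
    · subst h; simp
    · simp [h, Ne.symm h]
  rw [Finset.sum_congr rfl fun j _ => h2 j, Finset.sum_ite_eq' Finset.univ k]
  simp

lemma tau_inv [Fintype κ] (b : Module.Basis κ ℚ V) (w : V ≃ₗ[ℚ] V) (v : V) :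
    tau b w (tau b w⁻¹ v) = v := by
  rw [tau_tau, inv_mul_cancel, tau_one]

lemma eval_liftW [Fintype κ] (b : Module.Basis κ ℚ V) (w : V ≃ₗ[ℚ] V) (v : V)
    (f : MvPolynomial κ ℚ) :
    eval (coords b v) (liftW b w f) = eval (coords b (tau b w v)) f := by
  induction f using MvPolynomial.induction_on with
  | C a => simp [liftW]
  | add p q hp hq => simp only [map_add, hp, hq]
  | mul_X p i hp =>
    simp only [map_mul, hp, liftW_X, eval_X]
    congr 1
    rw [eval_embR]
    have h1 : coords b (tau b w v) i = b.repr (tau b w v) i := rfl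
    rw [h1, tau_repr]
    exact Finset.sum_congr rfl fun j _ => rfl

lemma quad_tau [Fintype κ] (b : Module.Basis κ ℚ V) {Q : MvPolynomial κ ℚ}
    (w : V ≃ₗ[ℚ] V) (hw : liftW b w Q = Q) (v : V) :
    polyQuadForm b Q (tau b w v) = polyQuadForm b Q v := by
  rw [polyQuadForm_eq, polyQuadForm_eq, ← eval_liftW, hw]

lemma Bform_tau [Fintype κ] (b : Module.Basis κ ℚ V) {Q : MvPolynomial κ ℚ}
    (hQ : Q.IsHomogeneous 2) (w : V ≃ₗ[ℚ] V) (hw : liftW b w Q = Q) (u v : V) :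
    Bform b Q (tau b w u) (tau b w v) = Bform b Q u v := by
  rw [Bform_polar b hQ, Bform_polar b hQ, ← tau_add, quad_tau b w hw, quad_tau b w hw,
    quad_tau b w hw]

end Tau

section Pair

variable {V : Type} [AddCommGroup V] [Module ℚ V] {κ : Type}

/-- coordinate pairing -/
def pairF [Fintype κ] (b : Module.Basis κ ℚ V) (u v : V) : ℚ :=
  ∑ i, b.repr u i * b.repr v i

lemma pairF_comm [Fintype κ] (b : Module.Basis κ ℚ V) (u v : V) : pairF b u v = pairF b v u :=
  Finset.sum_congr rfl fun i _ => mul_comm _ _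

lemma pairF_basis_right [Fintype κ] (b : Module.Basis κ ℚ V) (u : V) (j : κ) :
    pairF b u (b j) = b.repr u j := by
  classical
  rw [pairF]
  have h1 : ∀ i, b.repr u i * b.repr (b j) i = if i = j then b.repr u i else 0 := by
    intro i
    rw [Module.Basis.repr_self, Finsupp.single_apply]
    rcases eq_or_ne i j with h | h
    · subst h; simp
    · simp [h, Ne.symm h]
  rw [Finset.sum_congr rfl fun i _ => h1 i, Finset.sum_ite_eq' Finset.univ j]
  simp

lemma pairF_basis_left [Fintype κ] (b : Module.Basis κ ℚ V) (i : κ) (v : V) :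
    pairF b (b i) v = b.repr v i := by
  rw [pairF_comm, pairF_basis_right]

lemma pairF_cancel [Fintype κ] (b : Module.Basis κ ℚ V) {a a' : V}
    (h : ∀ z, pairF b a z = pairF b a' z) : a = a' := by
  apply Module.Basis.ext_elem b
  intro j
  rw [← pairF_basis_right b a j, ← pairF_basis_right b a' j, h]

lemma pairF_tau [Fintype κ] (b : Module.Basis κ ℚ V) (w : V ≃ₗ[ℚ] V) (u v : V) :
    pairF b (tau b w u) v = pairF b u (w v) := by
  rw [pairF, pairF]
  have h1 : ∀ k, b.repr (tau b w u) k = ∑ j, b.repr (w (b k)) j * b.repr u j :=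
    fun k => tau_repr b w u k
  have h2 : ∀ j, b.repr (w v) j = ∑ k, b.repr v k * b.repr (w (b k)) j :=
    fun j => repr_w b w v j
  simp only [h1, h2]
  simp only [Finset.sum_mul, Finset.mul_sum]
  rw [Finset.sum_comm]
  exact Finset.sum_congr rfl fun j _ => Finset.sum_congr rfl fun k _ => by ring

end Pair


section Refl

variable {V : Type} [AddCommGroup V] [Module ℚ V]

/-- the reflection in the root `α` as a linear map -/
def reflMap (D : RootSystemData V) (α : V) : V →ₗ[ℚ] V :=
  LinearMap.id - (D.coroot α).smulRight α

lemma reflMap_apply (D : RootSystemData V) (α x : V) :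
    reflMap D α x = x - D.coroot α x • α := rfl

lemma reflMap_invol (D : RootSystemData V) {α : V} (hα : α ∈ D.Φ) :
    Function.Involutive (reflMap D α) := by
  intro x
  have h2 : D.coroot α α = 2 := D.coroot_self α hα
  simp only [reflMap_apply, map_sub, map_smul, h2, smul_eq_mul]
  module

/-- the reflection in the root `α` as a linear equivalence -/
def reflEquiv (D : RootSystemData V) {α : V} (hα : α ∈ D.Φ) : V ≃ₗ[ℚ] V :=
  LinearEquiv.ofInvolutive (reflMap D α) (reflMap_invol D hα)

lemma reflEquiv_apply (D : RootSystemData V) {α : V} (hα : α ∈ D.Φ) (x : V) :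
    reflEquiv D hα x = x - D.coroot α x • α := rfl

lemma reflEquiv_mem (D : RootSystemData V) {α : V} (hα : α ∈ D.Φ) :
    reflEquiv D hα ∈ WeylGroup D :=
  Subgroup.subset_closure ⟨α, hα, fun x => rfl⟩

lemma reflEquiv_root (D : RootSystemData V) {α : V} (hα : α ∈ D.Φ) :
    reflEquiv D hα α = -α := by
  rw [reflEquiv_apply, D.coroot_self α hα, two_smul]
  abel

end Refl


section TMap

variable {V : Type} [AddCommGroup V] [Module ℚ V] {κ : Type}

set_option maxRecDepth 4000 in
lemma exists_T [Fintype κ] [FiniteDimensional ℚ V] (D : RootSystemData V)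
    (b : Module.Basis κ ℚ V) {Q Q' : MvPolynomial κ ℚ}
    (hQ2 : Q.IsHomogeneous 2) (hQ2' : Q'.IsHomogeneous 2)
    (hQW : ∀ w ∈ WeylGroup D, liftW b w Q = Q)
    (hQW' : ∀ w ∈ WeylGroup D, liftW b w Q' = Q')
    (hQnd : NondegQuad b Q) (hQnd' : NondegQuad b Q') :
    ∃ T : V →ₗ[ℚ] V,
      (∀ w ∈ WeylGroup D, ∀ v, T (w v) = w (T v)) ∧
      (∀ j v, ∑ i, b.repr (T (b i)) j * Bform b Q' (b i) v = Bform b Q (b j) v) := by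
  classical
  -- Step 1: construct T' with B'(T' u, v) = B(u, v).
  obtain ⟨T', hT'⟩ : ∃ T' : V →ₗ[ℚ] V, ∀ u v, Bform b Q' (T' u) v = Bform b Q u v := by
    let E' : V →ₗ[ℚ] V :=
      { toFun := fun u => ∑ j, Bform b Q' u (b j) • b j
        map_add' := fun u u' => by
          simp only [Bform_add_left, add_smul, Finset.sum_add_distrib]
        map_smul' := fun c u => by
          simp only [Bform_smul_left, RingHom.id_apply, Finset.smul_sum, smul_smul] }
    let E : V →ₗ[ℚ] V :=
      { toFun := fun u => ∑ j, Bform b Q u (b j) • b j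
        map_add' := fun u u' => by
          simp only [Bform_add_left, add_smul, Finset.sum_add_distrib]
        map_smul' := fun c u => by
          simp only [Bform_smul_left, RingHom.id_apply, Finset.smul_sum, smul_smul] }
    have hE'repr : ∀ u j, b.repr (E' u) j = Bform b Q' u (b j) := fun u j => repr_sum b _ j
    have hErepr : ∀ u j, b.repr (E u) j = Bform b Q u (b j) := fun u j => repr_sum b _ j
    have hE'inj : Function.Injective E' := by
      intro u u' huu'
      apply Bform_cancel b hQ2' hQnd'
      intro v
      rw [Bform_expand_right b hQ2' u v, Bform_expand_right b hQ2' u' v]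
      refine Finset.sum_congr rfl fun j _ => ?_
      rw [← hE'repr, ← hE'repr, huu']
    have hE'surj : Function.Surjective E' := LinearMap.injective_iff_surjective.mp hE'inj
    let E'e : V ≃ₗ[ℚ] V := LinearEquiv.ofBijective E' ⟨hE'inj, hE'surj⟩
    refine ⟨(E'e.symm : V →ₗ[ℚ] V).comp E, ?_⟩
    intro u v
    have hT'app : E' (E'e.symm (E u)) = E u := by
      have h := E'e.apply_symm_apply (E u)
      exact h
    have happ : ((E'e.symm : V →ₗ[ℚ] V).comp E) u = E'e.symm (E u) := rfl
    rw [happ, Bform_expand_right b hQ2' _ v, Bform_expand_right b hQ2 u v]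
    refine Finset.sum_congr rfl fun j _ => ?_
    congr 1
    rw [← hE'repr, ← hErepr, hT'app]
  -- Step 2: T' commutes with all tau's.
  have hT'tau : ∀ w ∈ WeylGroup D, ∀ v, T' (tau b w v) = tau b w (T' v) := by
    intro w hw v
    apply Bform_cancel b hQ2' hQnd'
    intro z
    rw [hT']
    have hz : tau b w (tau b w⁻¹ z) = z := tau_inv b w z
    calc Bform b Q (tau b w v) z
        = Bform b Q (tau b w v) (tau b w (tau b w⁻¹ z)) := by rw [hz]
      _ = Bform b Q v (tau b w⁻¹ z) := Bform_tau b hQ2 w (hQW w hw) v _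
      _ = Bform b Q' (T' v) (tau b w⁻¹ z) := (hT' v _).symm
      _ = Bform b Q' (tau b w (T' v)) (tau b w (tau b w⁻¹ z)) :=
          (Bform_tau b hQ2' w (hQW' w hw) _ _).symm
      _ = Bform b Q' (tau b w (T' v)) z := by rw [hz]
  -- Step 3: T is the coordinate transpose of T'.
  let T : V →ₗ[ℚ] V := b.constr ℚ (fun i => ∑ k, b.repr (T' (b k)) i • b k)
  have hTrepr : ∀ i j, b.repr (T (b i)) j = b.repr (T' (b j)) i := by
    intro i j
    have hc : T (b i) = ∑ k, b.repr (T' (b k)) i • b k := Module.Basis.constr_basis b ℚ _ i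
    rw [hc]
    exact repr_sum b _ j
  have hTu : ∀ (u : V) (j : κ), b.repr (T u) j = ∑ i, b.repr u i * b.repr (T' (b j)) i := by
    intro u j
    conv_lhs => rw [← Module.Basis.sum_repr b u]
    rw [map_sum, map_sum, Finsupp.finset_sum_apply]
    refine Finset.sum_congr rfl fun i _ => ?_
    rw [map_smul, map_smul, Finsupp.smul_apply, smul_eq_mul, hTrepr]
  have hT'v : ∀ (v : V) (i : κ), b.repr (T' v) i = ∑ j, b.repr v j * b.repr (T' (b j)) i := by
    intro v i
    conv_lhs => rw [← Module.Basis.sum_repr b v]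
    rw [map_sum, map_sum, Finsupp.finset_sum_apply]
    refine Finset.sum_congr rfl fun j _ => ?_
    rw [map_smul, map_smul, Finsupp.smul_apply, smul_eq_mul]
  have pairT : ∀ u v, pairF b (T u) v = pairF b u (T' v) := by
    intro u v
    rw [pairF, pairF]
    have e1 : ∑ i, b.repr (T u) i * b.repr v i
        = ∑ i, (∑ k, b.repr u k * b.repr (T' (b i)) k) * b.repr v i :=
      Finset.sum_congr rfl fun i _ => by rw [hTu]
    have e2 : ∑ k, b.repr u k * b.repr (T' v) k
        = ∑ k, b.repr u k * (∑ i, b.repr v i * b.repr (T' (b i)) k) :=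
      Finset.sum_congr rfl fun k _ => by rw [hT'v v k]
    rw [e1, e2]
    simp only [Finset.sum_mul, Finset.mul_sum]
    rw [Finset.sum_comm]
    exact Finset.sum_congr rfl fun j _ => Finset.sum_congr rfl fun i _ => by ring
  have hwz : ∀ (w : V ≃ₗ[ℚ] V) (x z : V), pairF b (w x) z = pairF b (tau b w z) x := by
    intro w x z
    rw [pairF_tau b w z x, pairF_comm]
  refine ⟨T, ?_, ?_⟩
  · intro w hw v
    apply pairF_cancel b
    intro z
    calc pairF b (T (w v)) z = pairF b (w v) (T' z) := pairT _ _
      _ = pairF b (tau b w (T' z)) v := by rw [← hwz]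
      _ = pairF b (T' (tau b w z)) v := by rw [← hT'tau w hw z]
      _ = pairF b v (T' (tau b w z)) := pairF_comm b _ _
      _ = pairF b (T v) (tau b w z) := (pairT v _).symm
      _ = pairF b (tau b w z) (T v) := pairF_comm b _ _
      _ = pairF b (w (T v)) z := (hwz w (T v) z).symm
  · intro j v
    have h1 : ∀ i, b.repr (T (b i)) j * Bform b Q' (b i) v
        = b.repr (T' (b j)) i * Bform b Q' (b i) v := fun i => by rw [hTrepr]
    rw [Finset.sum_congr rfl fun i _ => h1 i, ← Bform_expand_left b Q' (T' (b j)) v, hT']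

end TMap


section Key

variable {V : Type} [AddCommGroup V] [Module ℚ V] {κ : Type}

lemma T_root [Fintype κ] (D : RootSystemData V) (b : Module.Basis κ ℚ V) (T : V →ₗ[ℚ] V)
    (hTw : ∀ w ∈ WeylGroup D, ∀ v, T (w v) = w (T v)) {α : V} (hα : α ∈ D.Φ) :
    ∃ c : ℚ, T α = c • α := by
  have hs := hTw (reflEquiv D hα) (reflEquiv_mem D hα) α
  rw [reflEquiv_root D hα, map_neg, reflEquiv_apply] at hs
  refine ⟨D.coroot α (T α) / 2, ?_⟩
  have h2 : D.coroot α (T α) • α = T α + T α := by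
    calc D.coroot α (T α) • α = T α - (T α - D.coroot α (T α) • α) := by abel
      _ = T α - (-T α) := by rw [← hs]
      _ = T α + T α := by abel
  have h4 : (2 : ℚ) • T α = D.coroot α (T α) • α := by rw [h2, two_smul]
  have h5 : T α = (2 : ℚ)⁻¹ • ((2 : ℚ) • T α) := by
    rw [smul_smul]
    norm_num
  conv_lhs => rw [h5, h4, smul_smul]
  congr 1
  ring

lemma mkDer_embR [Fintype κ] {ψ : MvPolynomial κ ℚ → MvPolynomial κ ℚ}
    (hψ : IsDerivFn ψ) (b : Module.Basis κ ℚ V) (T : V →ₗ[ℚ] V) (v : V) :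
    mkDer (fun i => ψ (embR b (T (b i)))) (embR b v) = ψ (embR b (T v)) := by
  rw [mkDer]
  have h1 : ∀ i, ψ (embR b (T (b i))) * (pderiv i) (embR b v)
      = b.repr v i • ψ (embR b (T (b i))) := by
    intro i
    rw [pderiv_embR, mul_comm, ← smul_eq_C_mul]
  rw [Finset.sum_congr rfl fun i _ => h1 i]
  let ψL : MvPolynomial κ ℚ →ₗ[ℚ] MvPolynomial κ ℚ := IsLinearMap.mk' ψ hψ.1
  have hL : ∀ g, ψL g = ψ g := fun g => rfl
  calc ∑ i, b.repr v i • ψ (embR b (T (b i)))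
      = ∑ i, ψL (b.repr v i • embR b (T (b i))) := by
        refine Finset.sum_congr rfl fun i _ => ?_
        rw [map_smul, hL]
    _ = ψL (∑ i, b.repr v i • embR b (T (b i))) := (map_sum ψL _ _).symm
    _ = ψ (embR b (T v)) := by
        rw [hL]
        congr 1
        calc ∑ i, b.repr v i • embR b (T (b i))
            = embR b (∑ i, b.repr v i • T (b i)) := by
              rw [map_sum]
              exact Finset.sum_congr rfl fun i _ => (map_smul (embR b) _ _).symm
          _ = embR b (T v) := by
              congr 1
              calc ∑ i, b.repr v i • T (b i) = T (∑ i, b.repr v i • b i) := by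
                    rw [map_sum]
                    exact Finset.sum_congr rfl fun i _ => (map_smul T _ _).symm
                _ = T v := by rw [Module.Basis.sum_repr]

lemma wtheta_le (D : RootSystemData V) (Θ : Finset V) (hΘ : Θ ⊆ D.Δ) :
    WThetaGroup D Θ ≤ WeylGroup D := by
  apply Subgroup.closure_mono
  rintro g ⟨α, hαΘ, hg⟩
  exact ⟨α, D.pos_subset (D.simple_subset (hΘ hαΘ)), hg⟩

lemma key_subset [Fintype κ] [FiniteDimensional ℚ V] (D : RootSystemData V)
    (b : Module.Basis κ ℚ V) (Θ : Finset V) (hΘ : Θ ⊆ D.Δ) (I : Finset V)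
    (hIΦ : ∀ α ∈ I, α ∈ D.Φ) {Q Q' : MvPolynomial κ ℚ}
    (hQ2 : Q.IsHomogeneous 2) (hQ2' : Q'.IsHomogeneous 2)
    (hQW : ∀ w ∈ WeylGroup D, liftW b w Q = Q)
    (hQW' : ∀ w ∈ WeylGroup D, liftW b w Q' = Q')
    (hQnd : NondegQuad b Q) (hQnd' : NondegQuad b Q') :
    {f : MvPolynomial κ ℚ | ∃ ψ, InLogDer b I ψ ∧
        (∀ w ∈ WThetaGroup D Θ, actDer b w ψ = ψ) ∧ ψ Q = f} ⊆
      {f : MvPolynomial κ ℚ | ∃ ψ, InLogDer b I ψ ∧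
        (∀ w ∈ WThetaGroup D Θ, actDer b w ψ = ψ) ∧ ψ Q' = f} := by
  classical
  obtain ⟨T, hTw, hTB⟩ := exists_T D b hQ2 hQ2' hQW hQW' hQnd hQnd'
  rintro f ⟨ψ, ⟨hψd, hψlog⟩, hψinv, rfl⟩
  refine ⟨mkDer (fun i => ψ (embR b (T (b i)))), ⟨mkDer_isDeriv _, ?_⟩, ?_, ?_⟩
  · -- logarithmic condition
    intro α hα
    obtain ⟨r, hr⟩ := hψlog α hα
    obtain ⟨c, hc⟩ := T_root D b T hTw (hIΦ α hα)
    refine ⟨C c * r, ?_⟩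
    rw [mkDer_embR hψd b T α, hc, map_smul, hψd.1.map_smul, hr, smul_eq_C_mul, mul_assoc]
  · -- W_Theta invariance
    intro w hw
    have hwW : w ∈ WeylGroup D := wtheta_le D Θ hΘ hw
    have hwW' : w⁻¹ ∈ WeylGroup D := (WeylGroup D).inv_mem hwW
    funext g
    refine derivFn_ext (actDer_isDeriv b w (mkDer_isDeriv _)) (mkDer_isDeriv _) ?_ g
    intro i
    rw [mkDer_X]
    simp only [actDer, liftW_X]
    rw [mkDer_embR hψd b T _, hTw w⁻¹ hwW' (b i), ← liftW_embR b w⁻¹ (T (b i))]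
    have hinv := congrFun (hψinv w hw) (embR b (T (b i)))
    simp only [actDer] at hinv
    exact hinv
  · -- value at Q'
    have dagger : ∀ j, ∑ i, b.repr (T (b i)) j • (pderiv i) Q' = (pderiv j) Q := by
      intro j
      apply MvPolynomial.funext
      intro x
      have hco : coords b (∑ k, x k • b k) = x := by
        funext k
        exact repr_sum b x k
      rw [map_sum]
      have h1 : ∀ i, eval x (b.repr (T (b i)) j • (pderiv i) Q')
          = b.repr (T (b i)) j * Bform b Q' (b i) (∑ k, x k • b k) := by
        intro i
        rw [smul_eq_C_mul, eval_mul, eval_C, Bform_basis, hco]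
      rw [Finset.sum_congr rfl fun i _ => h1 i, hTB j (∑ k, x k • b k), Bform_basis, hco]
    rw [derivFn_expand hψd Q, mkDer]
    have h2 : ∀ i, ψ (embR b (T (b i))) * (pderiv i) Q'
        = ∑ j, b.repr (T (b i)) j • (ψ (X j) * (pderiv i) Q') := by
      intro i
      rw [derivFn_embR hψd b (T (b i)), Finset.sum_mul]
      exact Finset.sum_congr rfl fun j _ => smul_mul_assoc _ _ _
    rw [Finset.sum_congr rfl fun i _ => h2 i, Finset.sum_comm]
    refine Finset.sum_congr rfl fun j _ => ?_
    rw [← dagger j, Finset.mul_sum]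
    exact Finset.sum_congr rfl fun i _ => (mul_smul_comm _ _ _).symm

end Key

end AIdealAux

/-- Let `Θ ⊆ Δ` and let `I` be a `Θ`-ideal in `Φ⁺`. If `Q` and `Q'`
are two `W`-invariant elements of `Sym²(V)` whose associated symmetric bilinear forms on
`V` are nondegenerate, then the ideals of `R^{W_Θ}` defined by them coincide:
`{ψ(Q) : ψ ∈ D(A_I)^{W_Θ}} = {ψ(Q') : ψ ∈ D(A_I)^{W_Θ}}`; i.e. `a(I)_Θ` does not
depend on the choice of `W`-invariant nondegenerate quadratic form. -/
theorem aIdealTheta_independent_of_quadForm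
    (D : RootSystemData V) (bV : Module.Basis κ ℚ V)
    (Θ : Finset V) (hΘ : Θ ⊆ D.Δ)
    (I : Finset V) (hI : IsThetaIdealOf D.Pos Θ I)
    (Q Q' : MvPolynomial κ ℚ)
    (hQ2 : Q.IsHomogeneous 2) (hQ2' : Q'.IsHomogeneous 2)
    (hQW : ∀ w ∈ WeylGroup D, liftW bV w Q = Q)
    (hQW' : ∀ w ∈ WeylGroup D, liftW bV w Q' = Q')
    (hQnd : NondegQuad bV Q) (hQnd' : NondegQuad bV Q') :
    {f : MvPolynomial κ ℚ | ∃ ψ, InLogDer bV I ψ ∧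
        (∀ w ∈ WThetaGroup D Θ, actDer bV w ψ = ψ) ∧ ψ Q = f} =
      {f : MvPolynomial κ ℚ | ∃ ψ, InLogDer bV I ψ ∧
        (∀ w ∈ WThetaGroup D Θ, actDer bV w ψ = ψ) ∧ ψ Q' = f} := by
  haveI : FiniteDimensional ℚ V := ⟨⟨D.Φ, D.span_eq_top⟩⟩
  haveI : Fintype κ := FiniteDimensional.fintypeBasisIndex bV
  have hIΦ : ∀ α ∈ I, α ∈ D.Φ := fun α hα => D.pos_subset (hI.1.1 hα)
  apply Set.Subset.antisymm
  · exact AIdealAux.key_subset D bV Θ hΘ I hIΦ hQ2 hQ2' hQW hQW' hQnd hQnd'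
  · exact AIdealAux.key_subset D bV Θ hΘ I hIΦ hQ2' hQ2 hQW' hQW hQnd' hQnd

end
end
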